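/- arXiv:2209.12381 — 4 statements merged into one kernel-verified Lean document; each statement's English description precedes it below -/
import Mathlib

section
/- Let μ be the standard Gaussian measure N(0, I_d) on ℝ^d and let 0 < ε ≤ 1. Then sup{∫_A ‖x‖² μ(dx) : A measurable, μ(A) ≤ ε} ≤ ε·(2d + 3ln(1/ε) + 3). -/
open MeasureTheory Real
open scoped ENNReal RealInnerProductSpace BigOperators

noncomputable section

/-- `ℝ^d` with the Euclidean norm. -/
abbrev Euc (d : ℕ) := EuclideanSpace ℝ (Fin d)

/-- Density of the Gaussian `N(0, σ²·I_d)` on `ℝ^d`. -/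
def gaussDensity (d : ℕ) (σ2 : ℝ) (x : Euc d) : ℝ :=
  (2 * π * σ2) ^ (-(d : ℝ) / 2) * Real.exp (-‖x‖ ^ 2 / (2 * σ2))

/-- Density `p̃_t = (M_{m_t ♯} P) * φ_{σ_t²}` of the Ornstein-Uhlenbeck (forward DDPM) process at
time `t` started at the probability measure `P`, where `m_t = e^{-t/2}`, `σ_t² = 1 - e^{-t}`. -/
def ouDensity {d : ℕ} (P : Measure (Euc d)) (t : ℝ) (x : Euc d) : ℝ :=
  ∫ y, gaussDensity d (1 - Real.exp (-t)) (x - y) ∂(P.map (fun z => Real.exp (-t / 2) • z))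

/-- χ²-divergence `χ²(q‖p) = ∫ q²/p − 1` between densities on `ℝ^d`. -/
def chi2d {d : ℕ} (q p : Euc d → ℝ) : ℝ := (∫ x, q x ^ 2 / p x) - 1

/-- KL divergence `KL(q‖p) = ∫ q ln(q/p)` between densities on `ℝ^d`. -/
def KLd {d : ℕ} (q p : Euc d → ℝ) : ℝ := ∫ x, q x * Real.log (q x / p x)

/-- Dirichlet form `ℰ_p(f) = ∫ ‖∇f‖² p`. -/
def dirichletForm {d : ℕ} (p f : Euc d → ℝ) : ℝ := ∫ x, ‖gradient f x‖ ^ 2 * p x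

/-- `ψ = (q/p) / E_p[(q/p)²]`. -/
def psiFun {d : ℕ} (q p : Euc d → ℝ) (x : Euc d) : ℝ :=
  (q x / p x) / ∫ y, (q y / p y) ^ 2 * p y

/-- χ²-divergence `χ²(P‖Q) = ∫ (dP/dQ)² dQ − 1` between measures. -/
def chi2M {α : Type*} [MeasurableSpace α] (P Q : Measure α) : ℝ :=
  (∫ x, ((P.rnDeriv Q) x).toReal ^ 2 ∂Q) - 1

/-- Total variation distance between measures. -/
def tvDist {α : Type*} [MeasurableSpace α] (P Q : Measure α) : ℝ :=
  sSup {r : ℝ | ∃ s : Set α, MeasurableSet s ∧ r = |(P s).toReal - (Q s).toReal|}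

/-- Orlicz `ψ₂` (subgaussian) norm of a real random variable. -/
def psi2Norm {Ω : Type*} [MeasurableSpace Ω] (P : Measure Ω) (Z : Ω → ℝ) : ℝ :=
  sInf {t : ℝ | 0 < t ∧ ∫ ω, Real.exp (Z ω ^ 2 / t ^ 2) ∂P ≤ 2}

/-- The standard Gaussian measure `N(0, I_d)` on `ℝ^d`. -/
def stdGaussian (d : ℕ) : Measure (Euc d) :=
  volume.withDensity (fun x => ENNReal.ofReal (gaussDensity d 1 x))

lemma integrable_exp_neg_mul_sq_norm' {d : ℕ} {b : ℝ} (hb : 0 < b) :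
    Integrable (fun x : Euc d => Real.exp (-b * ‖x‖ ^ 2)) := by
  have h : Integrable (fun v : Euc d =>
      Complex.exp (-(b : ℂ) * (‖v‖ : ℂ) ^ 2 + 0 * ((⟪(0 : Euc d), v⟫ : ℝ) : ℂ))) :=
    GaussianFourier.integrable_cexp_neg_mul_sq_norm_add (by simpa using hb) 0 0
  have h2 := h.norm
  refine h2.congr (Filter.Eventually.of_forall fun v => ?_)
  have hre : (((‖v‖ : ℝ) : ℂ) ^ 2).re = ‖v‖ ^ 2 := by
    rw [← Complex.ofReal_pow]; exact Complex.ofReal_re _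
  simp [Complex.norm_exp, hre]

lemma gauss_pos {d : ℕ} (x : Euc d) : 0 < gaussDensity d 1 x := by
  unfold gaussDensity
  have : (0:ℝ) < 2 * π * 1 := by positivity
  positivity

lemma gauss_cont {d : ℕ} : Continuous (gaussDensity d 1) := by
  unfold gaussDensity
  fun_prop

lemma gauss_meas' {d : ℕ} : Measurable fun x : Euc d => (gaussDensity d 1 x).toNNReal :=
  gauss_cont.measurable.real_toNNReal

lemma stdGaussian_eq (d : ℕ) :
    stdGaussian d = volume.withDensity (fun x => ((gaussDensity d 1 x).toNNReal : ℝ≥0∞)) := rfl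

lemma integrable_stdGaussian_iff {d : ℕ} (h : Euc d → ℝ) :
    Integrable h (stdGaussian d) ↔
      Integrable (fun x => gaussDensity d 1 x * h x) volume := by
  rw [stdGaussian_eq, integrable_withDensity_iff_integrable_smul gauss_meas']
  refine integrable_congr (Filter.Eventually.of_forall fun x => ?_)
  simp [NNReal.smul_def, Real.coe_toNNReal _ (gauss_pos x).le]

lemma setIntegral_stdGaussian {d : ℕ} (h : Euc d → ℝ) {A : Set (Euc d)}
    (hA : MeasurableSet A) :
    ∫ x in A, h x ∂(stdGaussian d) = ∫ x in A, gaussDensity d 1 x * h x := by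
  rw [stdGaussian_eq, restrict_withDensity hA,
    integral_withDensity_eq_integral_smul gauss_meas']
  refine integral_congr_ae (Filter.Eventually.of_forall fun x => ?_)
  simp [NNReal.smul_def, Real.coe_toNNReal _ (gauss_pos x).le]

lemma integral_stdGaussian {d : ℕ} (h : Euc d → ℝ) :
    ∫ x, h x ∂(stdGaussian d) = ∫ x, gaussDensity d 1 x * h x := by
  rw [stdGaussian_eq, integral_withDensity_eq_integral_smul gauss_meas']
  refine integral_congr_ae (Filter.Eventually.of_forall fun x => ?_)
  simp [NNReal.smul_def, Real.coe_toNNReal _ (gauss_pos x).le]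

lemma gauss_mul_exp {d : ℕ} (x : Euc d) :
    gaussDensity d 1 x * rexp (‖x‖ ^ 2 / 3)
      = (2 * π) ^ (-(d : ℝ) / 2) * rexp (-(1/6) * ‖x‖ ^ 2) := by
  unfold gaussDensity
  rw [mul_one, mul_assoc, ← Real.exp_add]
  congr 2
  ring

lemma log_three_le : Real.log 3 ≤ 4 / 3 := by
  rw [Real.log_le_iff_le_exp (by norm_num)]
  have h1 : (1:ℝ)/3 + 1 ≤ rexp (1/3) := Real.add_one_le_exp _
  have h2 : (2.7182818283 : ℝ) < rexp 1 := Real.exp_one_gt_d9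
  have h3 : rexp (4/3 : ℝ) = rexp 1 * rexp (1/3) := by
    rw [← Real.exp_add]; norm_num
  nlinarith [Real.exp_pos (1/3 : ℝ)]

lemma exp_third_integral {d : ℕ} :
    ∫ x, rexp (‖x‖ ^ 2 / 3) ∂(stdGaussian d) = (3 : ℝ) ^ ((d : ℝ) / 2) := by
  rw [integral_stdGaussian]
  simp_rw [gauss_mul_exp]
  rw [integral_const_mul]
  have h6 : (0:ℝ) < 1/6 := by norm_num
  have := GaussianFourier.integral_rexp_neg_mul_sq_norm (V := Euc d) h6
  simp_rw [neg_mul] at this ⊢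
  rw [this, finrank_euclideanSpace, Fintype.card_fin]
  have h2π : (0:ℝ) < 2 * π := by positivity
  rw [show (π / (1/6) : ℝ) = 3 * (2 * π) by ring,
    Real.mul_rpow (by norm_num) h2π.le, ← mul_assoc,
    show (-(d:ℝ)/2) = -((d:ℝ)/2) by ring, Real.rpow_neg h2π.le]
  have hne : ((2*π) ^ ((d:ℝ)/2)) ≠ 0 := (Real.rpow_pos_of_pos h2π _).ne'
  field_simp

lemma gauss_alt {d : ℕ} (x : Euc d) :
    gaussDensity d 1 x = (2 * π) ^ (-(d : ℝ) / 2) * rexp (-(1/2) * ‖x‖ ^ 2) := by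
  unfold gaussDensity
  rw [mul_one]
  congr 1
  ring

lemma gauss_integrable {d : ℕ} : Integrable (gaussDensity d 1) volume := by
  refine (Integrable.const_mul
    (integrable_exp_neg_mul_sq_norm' (show (0:ℝ) < 1/2 by norm_num))
    ((2*π) ^ (-(d:ℝ)/2))).congr ?_
  exact Filter.Eventually.of_forall fun x => (gauss_alt x).symm

lemma stdGaussian_finite (d : ℕ) : IsFiniteMeasure (stdGaussian d) := by
  unfold stdGaussian
  exact isFiniteMeasure_withDensity gauss_integrable.lintegral_lt_top.ne

/-- For the standard Gaussian `μ = N(0,I_d)` and `0 < ε ≤ 1`: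
`sup { ∫_A ‖x‖² dμ : μ(A) ≤ ε } ≤ ε (2d + 3 ln(1/ε) + 3)`. -/
theorem stmt_11 {d : ℕ} (ε : ℝ) (hε0 : 0 < ε) (hε1 : ε ≤ 1)
    (A : Set (Euc d)) (hA : MeasurableSet A) (hAε : stdGaussian d A ≤ ENNReal.ofReal ε) :
    (∫ x in A, ‖x‖ ^ 2 ∂(stdGaussian d)) ≤ ε * (2 * d + 3 * Real.log (1 / ε) + 3) := by
  haveI := stdGaussian_finite d
  set μ := stdGaussian d with hμ
  set L : ℝ := 2 * d + 3 * Real.log (1 / ε) with hLdef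
  have hlog : 0 ≤ Real.log (1 / ε) :=
    Real.log_nonneg (by rw [le_div_iff₀ hε0]; linarith)
  have hL0 : 0 ≤ L := by positivity
  set c : ℝ := 3 * Real.exp (-L / 3) with hcdef
  have hc0 : 0 ≤ c := by positivity
  have hpt : ∀ x : Euc d, ‖x‖ ^ 2 ≤ L + c * rexp (‖x‖ ^ 2 / 3) := by
    intro x
    have h1 : (‖x‖ ^ 2 - L) / 3 + 1 ≤ rexp ((‖x‖ ^ 2 - L) / 3) := Real.add_one_le_exp _
    have h2 : rexp ((‖x‖ ^ 2 - L) / 3) = rexp (-L / 3) * rexp (‖x‖ ^ 2 / 3) := by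
      rw [← Real.exp_add]; ring_nf
    have h3 : c * rexp (‖x‖ ^ 2 / 3) = 3 * (rexp (-L / 3) * rexp (‖x‖ ^ 2 / 3)) := by
      rw [hcdef]; ring
    rw [h2] at h1
    linarith
  have hexp_int : Integrable (fun x : Euc d => rexp (‖x‖ ^ 2 / 3)) μ := by
    rw [hμ, integrable_stdGaussian_iff]
    refine (Integrable.const_mul
      (integrable_exp_neg_mul_sq_norm' (show (0:ℝ) < 1/6 by norm_num))
      ((2*π) ^ (-(d:ℝ)/2))).congr ?_
    exact Filter.Eventually.of_forall fun x => (gauss_mul_exp x).symm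
  have hF_int : Integrable (fun x : Euc d => L + c * rexp (‖x‖ ^ 2 / 3)) μ :=
    (integrable_const L).add (hexp_int.const_mul c)
  have hμA_lt : μ A ≠ ⊤ := (lt_of_le_of_lt hAε ENNReal.ofReal_lt_top).ne
  have hμA : (μ A).toReal ≤ ε := ENNReal.toReal_le_of_le_ofReal hε0.le hAε
  have hnorm_int : Integrable (fun x : Euc d => ‖x‖ ^ 2) μ := by
    refine hF_int.mono ((continuous_norm.pow 2).aestronglyMeasurable)
      (Filter.Eventually.of_forall fun x => ?_)
    rw [Real.norm_eq_abs, abs_of_nonneg (by positivity : (0:ℝ) ≤ ‖x‖ ^ 2), Real.norm_eq_abs]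
    exact (hpt x).trans (le_abs_self _)
  have key : c * (3:ℝ) ^ ((d:ℝ)/2) ≤ 3 * ε := by
    have hεlog : rexp (-Real.log (1/ε)) = ε := by
      rw [one_div, Real.log_inv, neg_neg, Real.exp_log hε0]
    have hc : c = 3 * (rexp (-(2*(d:ℝ))/3) * ε) := by
      rw [hcdef, show -L/3 = (-(2*(d:ℝ))/3) + (-Real.log (1/ε)) by rw [hLdef]; ring,
        Real.exp_add, hεlog]
    have h3 : (3:ℝ) ^ ((d:ℝ)/2) = rexp (Real.log 3 * ((d:ℝ)/2)) := by
      rw [Real.rpow_def_of_pos (by norm_num)]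
    have hprod : rexp (-(2*(d:ℝ))/3) * rexp (Real.log 3 * ((d:ℝ)/2)) ≤ 1 := by
      rw [← Real.exp_add, Real.exp_le_one_iff]
      have hl3 := log_three_le
      have hd : (0:ℝ) ≤ d := Nat.cast_nonneg d
      nlinarith
    calc c * (3:ℝ) ^ ((d:ℝ)/2)
        = 3 * ε * (rexp (-(2*(d:ℝ))/3) * rexp (Real.log 3 * ((d:ℝ)/2))) := by
          rw [hc, h3]; ring
      _ ≤ 3 * ε * 1 := mul_le_mul_of_nonneg_left hprod (by positivity)
      _ = 3 * ε := by ring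
  calc ∫ x in A, ‖x‖ ^ 2 ∂μ
      ≤ ∫ x in A, (L + c * rexp (‖x‖ ^ 2 / 3)) ∂μ :=
        setIntegral_mono_on hnorm_int.integrableOn hF_int.integrableOn hA fun x _ => hpt x
    _ = L * (μ A).toReal + c * ∫ x in A, rexp (‖x‖ ^ 2 / 3) ∂μ := by
        rw [integral_add (show Integrable (fun _ => L) (μ.restrict A) from integrableOn_const hμA_lt)
          (hexp_int.integrableOn.const_mul c), integral_const, integral_const_mul]
        simp [mul_comm, Measure.real]
    _ ≤ L * ε + c * ∫ x, rexp (‖x‖ ^ 2 / 3) ∂μ := by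
        gcongr
        exact (Filter.Eventually.of_forall fun x => (Real.exp_pos _).le)
        exact Measure.restrict_le_self
    _ = L * ε + c * (3:ℝ) ^ ((d:ℝ)/2) := by rw [hμ, exp_third_integral]
    _ ≤ L * ε + 3 * ε := by linarith
    _ = ε * (2 * d + 3 * Real.log (1 / ε) + 3) := by rw [hLdef]; ring
end
end

section
/- Let μ be the standard Gaussian measure N(0, I_d) on ℝ^d and let 0 < ε ≤ 1. Then sup{∫_A ‖x‖⁴ μ(dx) : A measurable, μ(A) ≤ ε} ≤ ε·(2d + 3ln(1/ε))² + 3ε·(2d + 3ln(1/ε)) + 9ε. -/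
open MeasureTheory Real
open scoped ENNReal RealInnerProductSpace BigOperators

noncomputable section

set_option maxHeartbeats 1000000
section Stmt12AuxSec
open Filter Set
namespace Stmt12Aux


lemma exp13 : (4:ℝ)/3 ≤ rexp (1/3) := by
  have := Real.add_one_le_exp (1/3:ℝ); linarith

lemma exp12 : (3:ℝ)/2 ≤ rexp (1/2) := by
  have := Real.add_one_le_exp (1/2:ℝ); linarith

lemma exp23 : (5:ℝ)/3 ≤ rexp (2/3) := by
  have := Real.add_one_le_exp (2/3:ℝ); linarith

lemma exp1 : (9:ℝ)/4 ≤ rexp 1 := by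
  have h := exp12
  have : (3/2:ℝ) * (3/2) ≤ rexp (1/2) * rexp (1/2) := by
    apply mul_le_mul h h (by norm_num) (le_trans (by norm_num) h)
  rw [← Real.exp_add] at this
  norm_num at this ⊢
  linarith

lemma exp43 : (3:ℝ) ≤ rexp (4/3) := by
  have h := exp13
  have h4 : ((4:ℝ)/3)^(4:ℕ) ≤ (rexp (1/3))^(4:ℕ) := by
    apply pow_le_pow_left₀ (by norm_num) h
  rw [← Real.exp_nat_mul] at h4
  norm_num at h4
  linarith

/-- the Gamma-induction predicate -/
def Gd (d : ℕ) : Prop :=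
  (3*((d:ℝ)-2)) ^ (((d:ℝ)-2)/2) * rexp (-(((d:ℝ)-2)/2)) ≤
    rexp (2*(d:ℝ)/3) * ((2:ℝ) ^ ((d:ℝ)/2 - 1) * Real.Gamma ((d:ℝ)/2)) / 3

lemma sqrt3_le : Real.sqrt 3 ≤ 2 := by
  rw [show (2:ℝ) = Real.sqrt 4 by rw [show (4:ℝ) = 2^2 by norm_num, Real.sqrt_sq (by norm_num)]]
  exact Real.sqrt_le_sqrt (by norm_num)

lemma sqrtpi_ge : (3:ℝ)/2 ≤ Real.sqrt π := by
  rw [show (3/2:ℝ) = Real.sqrt ((3/2)^2) by rw [Real.sqrt_sq (by norm_num)]]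
  exact Real.sqrt_le_sqrt (by nlinarith [Real.pi_gt_three])

lemma sqrt2_ge : (7:ℝ)/5 ≤ Real.sqrt 2 := by
  rw [show (7/5:ℝ) = Real.sqrt ((7/5)^2) by rw [Real.sqrt_sq (by norm_num)]]
  exact Real.sqrt_le_sqrt (by norm_num)

lemma G3 : Gd 3 := by
  unfold Gd
  have hG : Real.Gamma ((3:ℝ)/2) = Real.sqrt π / 2 := by
    rw [show (3:ℝ)/2 = 1/2 + 1 by norm_num, Real.Gamma_add_one (by norm_num),
      Real.Gamma_one_half_eq]
    ring
  push_cast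
  norm_num
  rw [hG, show ((3:ℝ))^((1:ℝ)/2) = Real.sqrt 3 by rw [Real.sqrt_eq_rpow],
    show ((2:ℝ))^((1:ℝ)/2) = Real.sqrt 2 by rw [Real.sqrt_eq_rpow]]
  have h1 : rexp (-(1/2:ℝ)) ≤ 2/3 := by
    rw [Real.exp_neg]
    rw [show (2/3:ℝ) = (3/2)⁻¹ by norm_num]
    exact inv_anti₀ (by norm_num) exp12
  have h2 : (4:ℝ) ≤ rexp 2 := by
    have := exp1
    have h' : (9/4:ℝ)*(9/4) ≤ rexp 1 * rexp 1 :=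
      mul_le_mul this this (by norm_num) (le_trans (by norm_num) this)
    rw [← Real.exp_add] at h'
    norm_num at h'
    linarith
  have hL : Real.sqrt 3 * rexp (-(1/2:ℝ)) ≤ 4/3 := by
    calc Real.sqrt 3 * rexp (-(1/2:ℝ)) ≤ 2 * (2/3) :=
          mul_le_mul sqrt3_le h1 (Real.exp_pos _).le (by norm_num)
    _ ≤ 4/3 := by norm_num
  have hsq : (21:ℝ)/10 ≤ Real.sqrt 2 * Real.sqrt π := by
    calc (21:ℝ)/10 = (7/5) * (3/2) := by norm_num
    _ ≤ Real.sqrt 2 * Real.sqrt π :=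
      mul_le_mul sqrt2_ge sqrtpi_ge (by norm_num) (Real.sqrt_nonneg 2)
  have hR : (4:ℝ)/3 ≤ rexp 2 * (Real.sqrt 2 * (Real.sqrt π / 2)) / 3 := by
    have : (4:ℝ) * (21/20) ≤ rexp 2 * (Real.sqrt 2 * Real.sqrt π / 2) := by
      apply mul_le_mul h2 (by linarith) (by norm_num) (by positivity)
    calc (4:ℝ)/3 ≤ 4 * (21/20) / 3 := by norm_num
    _ ≤ rexp 2 * (Real.sqrt 2 * (Real.sqrt π / 2)) / 3 := by
        rw [show Real.sqrt 2 * (Real.sqrt π / 2) = Real.sqrt 2 * Real.sqrt π / 2 by ring]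
        linarith
  linarith

lemma G4 : Gd 4 := by
  unfold Gd
  push_cast
  norm_num
  have h1 : rexp (-(1:ℝ)) ≤ 4/9 := by
    rw [Real.exp_neg, show (4/9:ℝ) = (9/4)⁻¹ by norm_num]
    exact inv_anti₀ (by norm_num) exp1
  have h2 : (81:ℝ)/16 ≤ rexp (8/3) := by
    have := exp1
    have h' : (9/4:ℝ)*(9/4) ≤ rexp 1 * rexp 1 :=
      mul_le_mul this this (by norm_num) (le_trans (by norm_num) this)
    rw [← Real.exp_add] at h'
    norm_num at h'
    calc (81:ℝ)/16 ≤ rexp 2 := by linarith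
    _ ≤ rexp (8/3) := Real.exp_le_exp.2 (by norm_num)
  nlinarith [Real.exp_le_exp.2 (show (8/3:ℝ) ≥ 2 by norm_num)]


lemma Gstep (d : ℕ) (hd : 3 ≤ d) (h : Gd d) : Gd (d+2) := by
  unfold Gd at h ⊢
  have hd2 : (0:ℝ) < (d:ℝ) - 2 := by
    have : (3:ℝ) ≤ (d:ℝ) := by exact_mod_cast hd
    linarith
  have hdpos : (0:ℝ) < (d:ℝ) := by linarith
  set a : ℝ := ((d:ℝ)-2)/2 with ha_def
  have ha : 0 < a := by positivity
  have hcast : ((d:ℕ):ℝ) + 2 - 2 = (d:ℝ) := by ring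
  push_cast
  rw [show (d:ℝ) + 2 - 2 = (d:ℝ) by ring]
  -- LHS(d+2) = (3d)^(d/2) * exp(-(d/2))
  -- step 1 : (3d)^(d/2) = (3d) * (3(d-2))^a * ((d/(d-2)))^a
  have h3d : (0:ℝ) < 3*(d:ℝ) := by linarith
  have hsplit : (3*(d:ℝ)) ^ ((d:ℝ)/2) = (3*(d:ℝ)) * ((3*((d:ℝ)-2)) ^ a * ((d:ℝ)/((d:ℝ)-2)) ^ a) := by
    rw [show (d:ℝ)/2 = 1 + a by rw [ha_def]; ring, Real.rpow_add h3d, Real.rpow_one]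
    congr 1
    rw [← Real.mul_rpow (by linarith) (by positivity)]
    congr 1
    field_simp
  have hquot : ((d:ℝ)/((d:ℝ)-2)) ^ a ≤ rexp 1 := by
    have h1 : (d:ℝ)/((d:ℝ)-2) = 1 + 2/((d:ℝ)-2) := by field_simp; ring
    have h2 : (d:ℝ)/((d:ℝ)-2) ≤ rexp (2/((d:ℝ)-2)) := by
      rw [h1]; have := Real.add_one_le_exp (2/((d:ℝ)-2)); linarith
    calc ((d:ℝ)/((d:ℝ)-2)) ^ a ≤ (rexp (2/((d:ℝ)-2))) ^ a :=
          Real.rpow_le_rpow (by positivity) h2 ha.le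
    _ = rexp ((2/((d:ℝ)-2)) * a) := (Real.exp_mul _ _).symm
    _ = rexp 1 := by rw [ha_def]; congr 1; field_simp
  have hexp : rexp (-((d:ℝ)/2)) = rexp (-a) * rexp (-1) := by
    rw [← Real.exp_add]; congr 1; rw [ha_def]; ring
  -- so LHS(d+2) ≤ 3d * LHS(d)
  have hLHS : (3*(d:ℝ)) ^ ((d:ℝ)/2) * rexp (-((d:ℝ)/2)) ≤
      (3*(d:ℝ)) * ((3*((d:ℝ)-2)) ^ a * rexp (-a)) := by
    rw [hsplit, hexp]
    have hb1 : (0:ℝ) ≤ (3*((d:ℝ)-2)) ^ a := by positivity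
    calc (3*(d:ℝ)) * ((3*((d:ℝ)-2)) ^ a * ((d:ℝ)/((d:ℝ)-2)) ^ a) * (rexp (-a) * rexp (-1))
        = (3*(d:ℝ)) * ((3*((d:ℝ)-2)) ^ a * rexp (-a)) * (((d:ℝ)/((d:ℝ)-2)) ^ a * rexp (-1)) := by
          ring
      _ ≤ (3*(d:ℝ)) * ((3*((d:ℝ)-2)) ^ a * rexp (-a)) * (rexp 1 * rexp (-1)) := by
          apply mul_le_mul_of_nonneg_left _ (by positivity)
          exact mul_le_mul_of_nonneg_right hquot (Real.exp_pos _).le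
      _ = (3*(d:ℝ)) * ((3*((d:ℝ)-2)) ^ a * rexp (-a)) := by
          rw [← Real.exp_add]; norm_num
  -- RHS(d+2) = exp(4/3) * d * RHS(d)
  have hG : Real.Gamma (((d:ℝ)+2)/2) = ((d:ℝ)/2) * Real.Gamma ((d:ℝ)/2) := by
    rw [show ((d:ℝ)+2)/2 = (d:ℝ)/2 + 1 by ring, Real.Gamma_add_one (by positivity)]
  have h2pow : (2:ℝ) ^ (((d:ℝ)+2)/2 - 1) = 2 * (2:ℝ) ^ ((d:ℝ)/2 - 1) := by
    rw [show ((d:ℝ)+2)/2 - 1 = 1 + ((d:ℝ)/2 - 1) by ring, Real.rpow_add (by norm_num),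
      Real.rpow_one]
  have hexp2 : rexp (2*((d:ℝ)+2)/3) = rexp (4/3) * rexp (2*(d:ℝ)/3) := by
    rw [← Real.exp_add]; congr 1; ring
  have hRHS : rexp (2*((d:ℝ)+2)/3) * ((2:ℝ) ^ (((d:ℝ)+2)/2 - 1) * Real.Gamma (((d:ℝ)+2)/2)) / 3
      = rexp (4/3) * (d:ℝ) * (rexp (2*(d:ℝ)/3) * ((2:ℝ) ^ ((d:ℝ)/2 - 1) * Real.Gamma ((d:ℝ)/2)) / 3) := by
    rw [hG, h2pow, hexp2]; ring
  rw [hRHS]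
  have hRHSd_pos : 0 ≤ rexp (2*(d:ℝ)/3) * ((2:ℝ) ^ ((d:ℝ)/2 - 1) * Real.Gamma ((d:ℝ)/2)) / 3 := by
    have := Real.Gamma_pos_of_pos (show (0:ℝ) < (d:ℝ)/2 by positivity)
    positivity
  calc (3*(d:ℝ)) ^ ((d:ℝ)/2) * rexp (-((d:ℝ)/2))
      ≤ (3*(d:ℝ)) * ((3*((d:ℝ)-2)) ^ a * rexp (-a)) := hLHS
    _ ≤ (3*(d:ℝ)) * (rexp (2*(d:ℝ)/3) * ((2:ℝ) ^ ((d:ℝ)/2 - 1) * Real.Gamma ((d:ℝ)/2)) / 3) := by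
        apply mul_le_mul_of_nonneg_left _ (by linarith)
        exact h
    _ ≤ (rexp (4/3) * (d:ℝ)) * (rexp (2*(d:ℝ)/3) * ((2:ℝ) ^ ((d:ℝ)/2 - 1) * Real.Gamma ((d:ℝ)/2)) / 3) := by
        apply mul_le_mul_of_nonneg_right _ hRHSd_pos
        nlinarith [exp43]
    _ = rexp (4/3) * (d:ℝ) * (rexp (2*(d:ℝ)/3) * ((2:ℝ) ^ ((d:ℝ)/2 - 1) * Real.Gamma ((d:ℝ)/2)) / 3) := by
        ring

lemma Gall : ∀ d : ℕ, 3 ≤ d → Gd d := by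
  intro d
  induction d using Nat.strong_induction_on with
  | _ d ih =>
    intro hd
    match d, hd with
    | 3, _ => exact G3
    | 4, _ => exact G4
    | (n+5), _ =>
      have h := ih (n+3) (by omega) (by omega)
      exact Gstep (n+3) (by omega) h

lemma sup_bound {a s : ℝ} (ha : 0 < a) (hs : 0 ≤ s) :
    s ^ a * rexp (-s/6) ≤ (6*a) ^ a * rexp (-a) := by
  rcases eq_or_lt_of_le hs with h0 | hs'
  · rw [← h0, Real.zero_rpow ha.ne', zero_mul]
    positivity
  · have h6a : (0:ℝ) < 6*a := by linarith
    rw [Real.rpow_def_of_pos hs', Real.rpow_def_of_pos h6a, ← Real.exp_add, ← Real.exp_add,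
      Real.exp_le_exp]
    have hlog : Real.log s - Real.log (6*a) = Real.log (s/(6*a)) :=
      (Real.log_div hs'.ne' h6a.ne').symm
    have hle : Real.log (s/(6*a)) ≤ s/(6*a) - 1 := Real.log_le_sub_one_of_pos (by positivity)
    have hmul : a * Real.log (s/(6*a)) ≤ a * (s/(6*a) - 1) :=
      mul_le_mul_of_nonneg_left hle ha.le
    have : a * (s/(6*a)) = s/6 := by field_simp
    nlinarith [hmul, hlog]

/-- Core pointwise bound: for `y > 0` with `y² ≥ 2d`, `d ≥ 1`:
`y^(d-1) exp(-y²/6) ≤ K_d y` where `K_d = exp(2d/3) 2^(d/2-1) Γ(d/2) / 3`. -/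
lemma core (d : ℕ) (hd : 1 ≤ d) {y : ℝ} (hy : 0 < y) (h2d : 2*(d:ℝ) ≤ y^2) :
    y^(d-1) * rexp (-(y^2)/6) ≤
      (rexp (2*(d:ℝ)/3) * ((2:ℝ) ^ ((d:ℝ)/2 - 1) * Real.Gamma ((d:ℝ)/2)) / 3) * y := by
  match d, hd with
  | 1, _ =>
    simp only [show (1:ℕ)-1 = 0 from rfl, pow_zero, one_mul, Nat.cast_one]
    have hy2 : (2:ℝ) ≤ y^2 := by norm_num at h2d ⊢; linarith
    have hsy : Real.sqrt 2 ≤ y := by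
      calc Real.sqrt 2 ≤ Real.sqrt (y^2) := Real.sqrt_le_sqrt hy2
      _ = y := Real.sqrt_sq hy.le
    have hL : rexp (-(y^2)/6) ≤ 3/4 := by
      calc rexp (-(y^2)/6) ≤ rexp (-(1/3)) := by
            apply Real.exp_le_exp.2; linarith
      _ ≤ 3/4 := by
            rw [Real.exp_neg, show (3/4:ℝ) = (4/3)⁻¹ by norm_num]
            exact inv_anti₀ (by norm_num) exp13
    have hK : (3:ℝ)/4 ≤ (rexp (2*(1:ℝ)/3) * ((2:ℝ) ^ ((1:ℝ)/2 - 1) * Real.Gamma ((1:ℝ)/2)) / 3) * Real.sqrt 2 := by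
      have hGam : Real.Gamma ((1:ℝ)/2) = Real.sqrt π := Real.Gamma_one_half_eq
      have hpow : (2:ℝ) ^ ((1:ℝ)/2 - 1) * Real.sqrt 2 = 1 := by
        rw [show Real.sqrt 2 = (2:ℝ) ^ ((1:ℝ)/2) from Real.sqrt_eq_rpow 2,
          ← Real.rpow_add (by norm_num)]
        norm_num
      have h1 : (rexp (2*(1:ℝ)/3) * ((2:ℝ) ^ ((1:ℝ)/2 - 1) * Real.Gamma ((1:ℝ)/2)) / 3) * Real.sqrt 2
          = rexp (2/3) * Real.sqrt π / 3 := by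
        rw [hGam, show 2*(1:ℝ)/3 = 2/3 by norm_num,
          show (rexp (2/3) * ((2:ℝ) ^ ((1:ℝ)/2 - 1) * Real.sqrt π) / 3) * Real.sqrt 2
            = ((2:ℝ) ^ ((1:ℝ)/2 - 1) * Real.sqrt 2) * (rexp (2/3) * Real.sqrt π / 3) from by ring,
          hpow]
        ring
      rw [h1]
      have : (5:ℝ)/3 * (3/2) / 3 ≤ rexp (2/3) * Real.sqrt π / 3 := by
        have := mul_le_mul exp23 sqrtpi_ge (by norm_num) (le_trans (by norm_num) exp23)
        linarith
      linarith
    calc rexp (-(y^2)/6) ≤ 3/4 := hL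
    _ ≤ (rexp (2*(1:ℝ)/3) * ((2:ℝ) ^ ((1:ℝ)/2 - 1) * Real.Gamma ((1:ℝ)/2)) / 3) * Real.sqrt 2 := hK
    _ ≤ (rexp (2*(1:ℝ)/3) * ((2:ℝ) ^ ((1:ℝ)/2 - 1) * Real.Gamma ((1:ℝ)/2)) / 3) * y := by
        apply mul_le_mul_of_nonneg_left hsy
        have := Real.Gamma_pos_of_pos (show (0:ℝ) < 1/2 by norm_num)
        positivity
  | 2, _ =>
    simp only [show (2:ℕ)-1 = 1 from rfl, pow_one, Nat.cast_ofNat]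
    rw [show (2:ℝ)/2 - 1 = 0 by norm_num, Real.rpow_zero, show (2:ℝ)/2 = 1 by norm_num,
      Real.Gamma_one]
    have h1 : rexp (-(y^2)/6) ≤ 1 := by
      rw [show (1:ℝ) = rexp 0 from (Real.exp_zero).symm]
      apply Real.exp_le_exp.2
      nlinarith
    have h2 : (3:ℝ) ≤ rexp (2*(2:ℝ)/3) := by
      rw [show 2*(2:ℝ)/3 = 4/3 by norm_num]; exact exp43
    calc y * rexp (-(y^2)/6) ≤ y * 1 := mul_le_mul_of_nonneg_left h1 hy.le
    _ = y := mul_one y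
    _ ≤ (rexp (2*(2:ℝ)/3) * (1 * 1) / 3) * y := by
        nlinarith
  | (n+3), _ =>
    set d : ℕ := n+3 with hd_def
    have hd3 : (3:ℝ) ≤ (d:ℝ) := by exact_mod_cast Nat.le_add_left 3 n
    set a : ℝ := ((d:ℝ)-2)/2 with ha_def
    have ha : 0 < a := by rw [ha_def]; linarith
    have hsq : (y^2) ^ a = y^(d-2) := by
      rw [← Real.rpow_natCast y (d-2), ← Real.rpow_natCast y 2, ← Real.rpow_mul hy.le]
      congr 1
      have : ((d-2:ℕ):ℝ) = (d:ℝ) - 2 := by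
        have : (2:ℕ) ≤ d := by omega
        push_cast [Nat.cast_sub this]
        ring
      rw [this, ha_def]
      ring
    have hpow : y^(d-1) = y * y^(d-2) := by
      rw [show d-1 = (d-2)+1 by omega, pow_succ]
      ring
    have hbound : (y^2) ^ a * rexp (-(y^2)/6) ≤ (6*a) ^ a * rexp (-a) :=
      sup_bound ha (by positivity)
    have h6a : 6*a = 3*((d:ℝ)-2) := by rw [ha_def]; ring
    have hGd : (3*((d:ℝ)-2)) ^ a * rexp (-a) ≤
        rexp (2*(d:ℝ)/3) * ((2:ℝ) ^ ((d:ℝ)/2 - 1) * Real.Gamma ((d:ℝ)/2)) / 3 := by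
      have := Gall d (by omega)
      unfold Gd at this
      rw [ha_def]
      exact this
    calc y^(d-1) * rexp (-(y^2)/6) = y * ((y^2) ^ a * rexp (-(y^2)/6)) := by
          rw [hpow, hsq]; ring
    _ ≤ y * ((6*a) ^ a * rexp (-a)) := mul_le_mul_of_nonneg_left hbound hy.le
    _ = y * ((3*((d:ℝ)-2)) ^ a * rexp (-a)) := by rw [h6a]
    _ ≤ y * (rexp (2*(d:ℝ)/3) * ((2:ℝ) ^ ((d:ℝ)/2 - 1) * Real.Gamma ((d:ℝ)/2)) / 3) :=
        mul_le_mul_of_nonneg_left hGd hy.le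
    _ = (rexp (2*(d:ℝ)/3) * ((2:ℝ) ^ ((d:ℝ)/2 - 1) * Real.Gamma ((d:ℝ)/2)) / 3) * y := by ring

/-- antiderivative for the tail integral -/
lemma tail_hasDeriv (τ : ℝ) (y : ℝ) :
    HasDerivAt (fun y : ℝ => (-(3/2)*y^4 - 9*y^2 + ((3/2)*τ^2 - 27)) * rexp (-(y^2)/3))
      (y * (y^4 - τ^2) * rexp (-(y^2)/3)) y := by
  have h1 : HasDerivAt (fun y : ℝ => -(y^2)/3) (-(2*y)/3) y := by
    have := ((hasDerivAt_pow 2 y).neg).div_const 3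
    simpa using this
  have h2 : HasDerivAt (fun y : ℝ => rexp (-(y^2)/3)) (rexp (-(y^2)/3) * (-(2*y)/3)) y := h1.exp
  have h3 : HasDerivAt (fun y : ℝ => -(3/2)*y^4 - 9*y^2 + ((3/2)*τ^2 - 27))
      (-(3/2)*(4*y^3) - 9*(2*y)) y := by
    have p4 := (hasDerivAt_pow 4 y).const_mul (-(3/2) : ℝ)
    have p2 := (hasDerivAt_pow 2 y).const_mul (9 : ℝ)
    have := (p4.sub p2).add_const ((3/2)*τ^2 - 27)
    refine this.congr_deriv ?_
    push_cast
    ring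
  have := h3.mul h2
  refine this.congr_deriv ?_
  ring

lemma tendsto_tail (τ : ℝ) :
    Tendsto (fun y : ℝ => (-(3/2)*y^4 - 9*y^2 + ((3/2)*τ^2 - 27)) * rexp (-(y^2)/3))
      atTop (nhds 0) := by
  have hcomp : Tendsto (fun y : ℝ => y^2/3) atTop atTop := by
    apply Tendsto.atTop_div_const (by norm_num)
    exact tendsto_pow_atTop (by norm_num)
  have key : ∀ y : ℝ, (-(3/2)*y^4 - 9*y^2 + ((3/2)*τ^2 - 27)) * rexp (-(y^2)/3)
      = (-(27/2)) * ((y^2/3)^2 * rexp (-(y^2/3))) + (-27) * ((y^2/3)^1 * rexp (-(y^2/3)))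
        + ((3/2)*τ^2 - 27) * ((y^2/3)^0 * rexp (-(y^2/3))) := by
    intro y
    have : -(y^2)/3 = -(y^2/3) := by ring
    rw [this]
    ring
  simp_rw [key]
  have t2 := (tendsto_pow_mul_exp_neg_atTop_nhds_zero 2).comp hcomp
  have t1 := (tendsto_pow_mul_exp_neg_atTop_nhds_zero 1).comp hcomp
  have t0 := (tendsto_pow_mul_exp_neg_atTop_nhds_zero 0).comp hcomp
  have := ((t2.const_mul (-(27/2):ℝ)).add (t1.const_mul (-27:ℝ))).add
    (t0.const_mul ((3/2)*τ^2 - 27))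
  simpa using this

lemma integrableOn_poly_gauss (c : ℝ) {b : ℝ} (hb : 0 < b) (n : ℕ) {s : Set ℝ}
    (hs : MeasurableSet s) (hsub : s ⊆ Ioi 0) :
    IntegrableOn (fun y : ℝ => y^n * rexp (-b*y^2)) s := by
  have h := integrableOn_rpow_mul_exp_neg_mul_sq hb (show (-1:ℝ) < (n:ℝ) by have := Nat.cast_nonneg (α:=ℝ) n; linarith)
  have h2 : IntegrableOn (fun y : ℝ => y ^ ((n:ℕ):ℝ) * rexp (-b * y ^ 2)) s :=
    h.mono_set hsub
  apply h2.congr_fun _ hs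
  intro y hy
  simp [Real.rpow_natCast]

/-- the exact tail integral -/
lemma tail_integral (τ : ℝ) (hτ : 0 < τ) :
    ∫ y in Ioi (0:ℝ), y * max (y^4 - τ^2) 0 * rexp (-(y^2)/3) = 9*(τ+3)*rexp (-τ/3) := by
  have hsτ : (0:ℝ) < Real.sqrt τ := Real.sqrt_pos.2 hτ
  have hsub : Ioi (Real.sqrt τ) ⊆ Ioi (0:ℝ) := fun y hy => lt_trans hsτ hy
  -- restrict to Ioi √τ
  rw [setIntegral_eq_of_subset_of_ae_diff_eq_zero measurableSet_Ioi.nullMeasurableSet hsub ?_]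
  · -- on Ioi √τ, max is the value
    rw [setIntegral_congr_fun measurableSet_Ioi
      (g := fun y => y * (y^4 - τ^2) * rexp (-(y^2)/3)) ?_]
    · have hderiv : ∀ y ∈ Ioi (Real.sqrt τ),
          HasDerivAt (fun y : ℝ => (-(3/2)*y^4 - 9*y^2 + ((3/2)*τ^2 - 27)) * rexp (-(y^2)/3))
            (y * (y^4 - τ^2) * rexp (-(y^2)/3)) y := fun y _ => tail_hasDeriv τ y
      have hint : IntegrableOn (fun y : ℝ => y * (y^4 - τ^2) * rexp (-(y^2)/3))
          (Ioi (Real.sqrt τ)) := by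
        apply Integrable.mono'
          ((integrableOn_poly_gauss 1 (show (0:ℝ) < 1/3 by norm_num) 5 measurableSet_Ioi hsub).add
           ((integrableOn_poly_gauss 1 (show (0:ℝ) < 1/3 by norm_num) 1 measurableSet_Ioi
             hsub).const_mul (τ^2)))
        · apply Continuous.aestronglyMeasurable
          continuity
        · filter_upwards [ae_restrict_mem measurableSet_Ioi] with y hy
          have hy0 : 0 < y := lt_trans hsτ hy
          have : -(y^2)/3 = -(1/3)*y^2 := by ring
          rw [Real.norm_eq_abs, abs_mul, abs_mul, this, Real.abs_exp]
          have h1 : |y * (y^4 - τ^2)| ≤ y^5 + τ^2*y := by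
            rw [abs_mul]
            have : |y^4 - τ^2| ≤ y^4 + τ^2 := by
              apply abs_sub _ _ |>.trans
              simp [abs_of_nonneg (by positivity : (0:ℝ) ≤ y^4),
                abs_of_nonneg (sq_nonneg τ)]
            calc |y| * |y^4 - τ^2| ≤ y * (y^4 + τ^2) := by
                  apply mul_le_mul (le_of_eq (abs_of_pos hy0)) this (abs_nonneg _) hy0.le
            _ = y^5 + τ^2*y := by ring
          calc |y| * |y^4 - τ^2| * rexp (-(1/3)*y^2)
              = |y * (y^4-τ^2)| * rexp (-(1/3)*y^2) := by rw [abs_mul]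
            _ ≤ (y^5 + τ^2*y) * rexp (-(1/3)*y^2) := by
                apply mul_le_mul_of_nonneg_right h1 (Real.exp_pos _).le
            _ = y^5 * rexp (-(1/3)*y^2) + τ^2*(y^1 * rexp (-(1/3)*y^2)) := by ring
      have htend := tendsto_tail τ
      rw [integral_Ioi_of_hasDerivAt_of_tendsto
        (Continuous.continuousWithinAt (by continuity)) hderiv hint htend]
      have h2 : Real.sqrt τ ^ 2 = τ := Real.sq_sqrt hτ.le
      have h4 : Real.sqrt τ ^ 4 = τ^2 := by
        rw [show (4:ℕ) = 2*2 from rfl, pow_mul, h2]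
      rw [h4, h2]
      ring
    · intro y hy
      dsimp only
      have hy2 : τ < y^2 := by
        have : Real.sqrt τ < y := hy
        calc τ = Real.sqrt τ ^ 2 := (Real.sq_sqrt hτ.le).symm
        _ < y^2 := by
            apply pow_lt_pow_left₀ this hsτ.le
            norm_num
      have : τ^2 < y^4 := by nlinarith
      rw [max_eq_left (by linarith)]
  · apply Filter.Eventually.of_forall
    intro y hy
    simp only [mem_diff, mem_Ioi, not_lt] at hy
    obtain ⟨hy0', this⟩ := hy
    have hy2 : y^2 ≤ τ := by
      calc y^2 ≤ Real.sqrt τ ^ 2 := by apply pow_le_pow_left₀ hy0'.le this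
      _ = τ := Real.sq_sqrt hτ.le
    have h4 : y^4 ≤ τ^2 := by nlinarith
    rw [max_eq_right (by linarith : y^4 - τ^2 ≤ 0), mul_zero, zero_mul]

lemma integrableOn_tail_max (τ : ℝ) (hτ : 0 < τ) :
    IntegrableOn (fun y : ℝ => y * max (y^4 - τ^2) 0 * rexp (-(y^2)/3)) (Ioi 0) := by
  apply Integrable.mono'
    ((integrableOn_poly_gauss 1 (show (0:ℝ) < 1/3 by norm_num) 5 measurableSet_Ioi
        (subset_refl _)).add
     ((integrableOn_poly_gauss 1 (show (0:ℝ) < 1/3 by norm_num) 1 measurableSet_Ioi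
        (subset_refl _)).const_mul (τ^2)))
  · apply Continuous.aestronglyMeasurable
    continuity
  · filter_upwards [ae_restrict_mem measurableSet_Ioi] with y hy
    have hy0 : (0:ℝ) < y := hy
    have : -(y^2)/3 = -(1/3)*y^2 := by ring
    rw [Real.norm_eq_abs, abs_mul, this, Real.abs_exp, abs_mul]
    have h1 : |y| * |max (y^4 - τ^2) 0| ≤ y^5 + τ^2*y := by
      have hm : |max (y^4 - τ^2) 0| ≤ y^4 + τ^2 := by
        rw [abs_of_nonneg (le_max_right _ _)]
        rcases max_cases (y^4 - τ^2) 0 with ⟨h,_⟩ | ⟨h,_⟩ <;> rw [h] <;> nlinarith [sq_nonneg τ]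
      calc |y| * |max (y^4 - τ^2) 0| ≤ y * (y^4 + τ^2) :=
            mul_le_mul (le_of_eq (abs_of_pos hy0)) hm (abs_nonneg _) hy0.le
      _ = y^5 + τ^2*y := by ring
    calc |y| * |max (y^4 - τ^2) 0| * rexp (-(1/3)*y^2)
        ≤ (y^5 + τ^2*y) * rexp (-(1/3)*y^2) :=
          mul_le_mul_of_nonneg_right h1 (Real.exp_pos _).le
      _ = y^5 * rexp (-(1/3)*y^2) + τ^2*(y^1 * rexp (-(1/3)*y^2)) := by ring

lemma quartic_bound {u : ℝ} (hu : 0 ≤ u) : u^2 * rexp (-u/2) ≤ 64 * rexp (-u/4) := by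
  have key : u^2 ≤ 64 * rexp (u/4) := by
    have h8 := Real.add_one_le_exp (u/8)
    have hsq : (u/8 + 1)^2 ≤ (rexp (u/8))^2 := by
      apply pow_le_pow_left₀ (by positivity) (by linarith)
    have hexp : (rexp (u/8))^2 = rexp (u/4) := by
      rw [sq, ← Real.exp_add]
      ring_nf
    nlinarith [sq_nonneg (u/8)]
  calc u^2 * rexp (-u/2) ≤ (64 * rexp (u/4)) * rexp (-u/2) :=
        mul_le_mul_of_nonneg_right key (Real.exp_pos _).le
  _ = 64 * rexp (-u/4) := by
      rw [mul_assoc, ← Real.exp_add]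
      ring_nf




lemma gauss_nonneg (d : ℕ) (x : Euc d) : 0 ≤ gaussDensity d 1 x := by
  unfold gaussDensity
  have := Real.pi_pos
  positivity

lemma gauss_cont (d : ℕ) : Continuous (gaussDensity d 1) := by
  unfold gaussDensity
  fun_prop

lemma integrable_exp_quarter (d : ℕ) {b : ℝ} (hb : 0 < b) :
    Integrable (fun x : Euc d => rexp (-b * ‖x‖^2)) volume := by
  have h := GaussianFourier.integrable_cexp_neg_mul_sq_norm_add
    (V := Euc d) (b := (b : ℂ)) (by simpa using hb) 0 0
  have h2 := h.norm
  apply h2.congr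
  filter_upwards with v
  simp [Complex.norm_exp, ← Complex.ofReal_pow]

lemma integrable_gauss_pow4 (d : ℕ) :
    Integrable (fun x : Euc d => gaussDensity d 1 x * ‖x‖^4) volume := by
  apply Integrable.mono'
    ((integrable_exp_quarter d (show (0:ℝ) < 1/4 by norm_num)).const_mul
      ((2*π*1) ^ (-(d:ℝ)/2) * 64))
  · exact ((gauss_cont d).mul ((continuous_norm).pow 4)).aestronglyMeasurable
  · filter_upwards with x
    have hc : (0:ℝ) < (2*π*1) ^ (-(d:ℝ)/2) := by
      have := Real.pi_pos; positivity
    rw [Real.norm_eq_abs, abs_of_nonneg (mul_nonneg (gauss_nonneg d x) (by positivity))]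
    unfold gaussDensity
    have hq := quartic_bound (sq_nonneg ‖x‖)
    have h1 : rexp (-‖x‖ ^ 2 / (2 * 1)) * ‖x‖^4 ≤ 64 * rexp (-(1/4) * ‖x‖^2) := by
      have e1 : -‖x‖ ^ 2 / (2*1) = -(‖x‖^2)/2 := by ring
      have e2 : -(1/4) * ‖x‖^2 = -(‖x‖^2)/4 := by ring
      rw [e1, e2]
      calc rexp (-‖x‖^2/2) * ‖x‖^4 = (‖x‖^2)^2 * rexp (-(‖x‖^2)/2) := by ring
      _ ≤ 64 * rexp (-(‖x‖^2)/4) := hq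
    calc (2*π*1) ^ (-(d:ℝ)/2) * rexp (-‖x‖ ^ 2 / (2 * 1)) * ‖x‖^4
        = (2*π*1) ^ (-(d:ℝ)/2) * (rexp (-‖x‖ ^ 2 / (2 * 1)) * ‖x‖^4) := by ring
      _ ≤ (2*π*1) ^ (-(d:ℝ)/2) * (64 * rexp (-(1/4) * ‖x‖^2)) :=
          mul_le_mul_of_nonneg_left h1 hc.le
      _ = (2*π*1) ^ (-(d:ℝ)/2) * 64 * rexp (-(1/4) * ‖x‖^2) := by ring


section Radial
variable {d : ℕ}

/-- value of the radial Gaussian integral -/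
lemma Jval (d : ℕ) (hd : 1 ≤ d) :
    ∫ y in Ioi (0:ℝ), y^(d-1) * rexp (-(y^2)/2)
      = 2 ^ ((d:ℝ)/2 - 1) * Real.Gamma ((d:ℝ)/2) := by
  have hq : (-1:ℝ) < ((d-1:ℕ):ℝ) := by
    have := Nat.cast_nonneg (α:=ℝ) (d-1); linarith
  have h := integral_rpow_mul_exp_neg_mul_rpow (p := 2) (q := ((d-1:ℕ):ℝ)) (b := 1/2)
    (by norm_num) hq (by norm_num)
  have hcongr : ∫ x in Ioi (0:ℝ), x ^ (((d-1:ℕ)):ℝ) * rexp (-(1/2) * x ^ (2:ℝ))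
      = ∫ y in Ioi (0:ℝ), y^(d-1) * rexp (-(y^2)/2) := by
    apply setIntegral_congr_fun measurableSet_Ioi
    intro y hy
    have hy0 : (0:ℝ) < y := hy
    show y ^ (((d-1:ℕ)):ℝ) * rexp (-(1/2) * y ^ (2:ℝ)) = y^(d-1) * rexp (-(y^2)/2)
    rw [Real.rpow_natCast, show (2:ℝ) = ((2:ℕ):ℝ) by norm_num, Real.rpow_natCast]
    norm_num
    left
    ring
  rw [← hcongr, h]
  have hd1 : ((d-1:ℕ):ℝ) = (d:ℝ) - 1 := by
    push_cast [Nat.cast_sub hd]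
    ring
  rw [hd1]
  have e1 : -(((d:ℝ)-1) + 1)/2 = -((d:ℝ)/2) := by ring
  rw [e1, show (((d:ℝ)-1) + 1)/2 = (d:ℝ)/2 by ring]
  have e2 : ((1:ℝ)/2) ^ (-((d:ℝ)/2)) = 2 ^ ((d:ℝ)/2) := by
    rw [one_div, ← Real.rpow_neg_one 2, ← Real.rpow_mul (by norm_num)]
    congr 1
    ring
  rw [e2, show (2:ℝ) ^ ((d:ℝ)/2 - 1) = 2 ^ ((d:ℝ)/2) * 2 ^ (-1:ℝ) by
    rw [← Real.rpow_add (by norm_num)]; ring_nf]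
  rw [Real.rpow_neg_one]
  ring

lemma Jpos (d : ℕ) (hd : 1 ≤ d) : 0 < ∫ y in Ioi (0:ℝ), y^(d-1) * rexp (-(y^2)/2) := by
  rw [Jval d hd]
  have h1 : 0 < Real.Gamma ((d:ℝ)/2) := by
    apply Real.Gamma_pos_of_pos
    have : (1:ℝ) ≤ (d:ℝ) := by exact_mod_cast hd
    linarith
  positivity

lemma nontrivial_euc (d : ℕ) (hd : 1 ≤ d) : Nontrivial (Euc d) := by
  apply Module.nontrivial_of_finrank_pos (R := ℝ)
  rw [finrank_euclideanSpace_fin]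
  omega

/-- normalization: `d * vol(ball) * J = (2π)^(d/2)` -/
lemma norm_const (d : ℕ) (hd : 1 ≤ d) :
    (d:ℝ) * (volume (Metric.ball (0:Euc d) 1)).toReal
      * ∫ y in Ioi (0:ℝ), y^(d-1) * rexp (-(y^2)/2) = (2*π) ^ ((d:ℝ)/2) := by
  haveI := nontrivial_euc d hd
  have h := MeasureTheory.integral_fun_norm_addHaar (volume : Measure (Euc d))
    (fun r : ℝ => rexp (-(r^2)/2))
  rw [finrank_euclideanSpace_fin] at h
  have hL : ∫ x : Euc d, rexp (-(‖x‖^2)/2) = (2*π) ^ ((d:ℝ)/2) := by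
    have := GaussianFourier.integral_rexp_neg_mul_sq_norm (V := Euc d)
      (show (0:ℝ) < 1/2 by norm_num)
    rw [finrank_euclideanSpace_fin] at this
    rw [show (fun x : Euc d => rexp (-(‖x‖^2)/2)) = fun x : Euc d => rexp (-(1/2) * ‖x‖^2) from
      funext fun x => by ring_nf]
    rw [this, show π / (1/2) = 2*π by ring]
  rw [hL] at h
  rw [h, nsmul_eq_mul, smul_eq_mul]
  simp only [smul_eq_mul, measureReal_def]
  ring

end Radial


lemma integral_withDensity_ofReal {α : Type*} [MeasurableSpace α] {μ : Measure α} {g : α → ℝ}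
    (hg : Measurable g) (hg0 : ∀ x, 0 ≤ g x) (f : α → ℝ) :
    ∫ x, f x ∂(μ.withDensity fun x => ENNReal.ofReal (g x)) = ∫ x, g x * f x ∂μ := by
  rw [show (fun x => ENNReal.ofReal (g x)) = fun x => (((g x).toNNReal : NNReal) : ENNReal) from rfl,
    integral_withDensity_eq_integral_smul hg.real_toNNReal f]
  congr 1
  funext x
  rw [NNReal.smul_def, Real.coe_toNNReal _ (hg0 x), smul_eq_mul]

end Stmt12Aux
end Stmt12AuxSec

/-- For the standard Gaussian `μ = N(0,I_d)` and `0 < ε ≤ 1`: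
`sup { ∫_A ‖x‖⁴ dμ : μ(A) ≤ ε } ≤ ε (2d + 3 ln(1/ε))² + 3ε (2d + 3 ln(1/ε)) + 9ε`. -/
theorem stmt_12 {d : ℕ} (ε : ℝ) (hε0 : 0 < ε) (hε1 : ε ≤ 1)
    (A : Set (Euc d)) (hA : MeasurableSet A) (hAε : stdGaussian d A ≤ ENNReal.ofReal ε) :
    (∫ x in A, ‖x‖ ^ 4 ∂(stdGaussian d)) ≤
      ε * (2 * d + 3 * Real.log (1 / ε)) ^ 2 + 3 * ε * (2 * d + 3 * Real.log (1 / ε)) + 9 * ε := by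
  have hL : 0 ≤ Real.log (1 / ε) := Real.log_nonneg ((le_div_iff₀ hε0).mpr (by linarith))
  set L := Real.log (1 / ε) with hLdef
  rcases Nat.eq_zero_or_pos d with hd0 | hd
  · subst hd0
    have hzero : ∫ x in A, ‖x‖ ^ 4 ∂(stdGaussian 0) = 0 := by
      have hx0 : ∀ x : Euc 0, ‖x‖ ^ 4 = (0:ℝ) := by
        intro x
        have : x = 0 := by ext i; exact i.elim0
        rw [this, norm_zero]
        norm_num
      calc ∫ x in A, ‖x‖ ^ 4 ∂(stdGaussian 0) = ∫ _x in A, (0:ℝ) ∂(stdGaussian 0) :=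
            setIntegral_congr_fun hA (fun x _ => hx0 x)
      _ = 0 := integral_zero _ _
    rw [hzero]
    have h1 : 0 ≤ 2 * ((0:ℕ):ℝ) + 3 * L := by push_cast; linarith
    have h2 : 0 ≤ ε * (2 * ((0:ℕ):ℝ) + 3 * L) ^ 2 := mul_nonneg hε0.le (sq_nonneg _)
    have h3 : 0 ≤ 3 * ε * (2 * ((0:ℕ):ℝ) + 3 * L) := mul_nonneg (by linarith) h1
    push_cast at h2 h3 ⊢
    linarith
  · haveI hNT := Stmt12Aux.nontrivial_euc d hd
    have hd1 : (1:ℝ) ≤ (d:ℝ) := by exact_mod_cast hd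
    set τ : ℝ := 2 * (d:ℝ) + 3 * L with hτdef
    have hτ2d : 2 * (d:ℝ) ≤ τ := by linarith
    have hτpos : 0 < τ := by linarith
    set μ := stdGaussian d with hμdef
    have hgmeas : Measurable (fun x : Euc d => gaussDensity d 1 x) :=
      (Stmt12Aux.gauss_cont d).measurable
    have hgE : Measurable (fun x : Euc d => ENNReal.ofReal (gaussDensity d 1 x)) :=
      hgmeas.ennreal_ofReal
    -- integrability of ‖x‖⁴ w.r.t. μ
    have hint4 : Integrable (fun x : Euc d => ‖x‖ ^ 4) μ := by
      rw [hμdef, stdGaussian,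
        integrable_withDensity_iff hgE (ae_of_all _ fun x => ENNReal.ofReal_lt_top)]
      have : (fun x : Euc d => ‖x‖ ^ 4 * (ENNReal.ofReal (gaussDensity d 1 x)).toReal)
          = fun x => gaussDensity d 1 x * ‖x‖ ^ 4 := by
        funext x
        rw [ENNReal.toReal_ofReal (Stmt12Aux.gauss_nonneg d x)]
        ring
      rw [this]
      exact Stmt12Aux.integrable_gauss_pow4 d
    have hinth : Integrable (fun x : Euc d => max (‖x‖ ^ 4 - τ^2) 0) μ := by
      apply Integrable.mono' hint4
      · apply Continuous.aestronglyMeasurable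
        exact ((continuous_norm.pow 4).sub continuous_const).max continuous_const
      · apply ae_of_all
        intro x
        rw [Real.norm_eq_abs, abs_of_nonneg (le_max_right _ _)]
        apply max_le _ (by positivity)
        nlinarith [sq_nonneg τ]
    have hμA : (μ A).toReal ≤ ε := ENNReal.toReal_le_of_le_ofReal hε0.le hAε
    -- step 1
    have step1 : ∫ x in A, ‖x‖ ^ 4 ∂μ ≤ ε * τ^2 + ∫ x, max (‖x‖ ^ 4 - τ^2) 0 ∂μ := by
      have hconstA : IntegrableOn (fun _ : Euc d => (τ^2:ℝ)) A μ :=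
        integrableOn_const (lt_of_le_of_lt hAε ENNReal.ofReal_lt_top).ne
      have m1 : ∫ x in A, ‖x‖ ^ 4 ∂μ ≤ ∫ x in A, (τ^2 + max (‖x‖ ^ 4 - τ^2) 0) ∂μ := by
        apply setIntegral_mono_on hint4.integrableOn
          (hconstA.add hinth.integrableOn) hA
        intro x _
        have := le_max_left (‖x‖ ^ 4 - τ^2) 0
        show ‖x‖ ^ 4 ≤ τ^2 + max (‖x‖ ^ 4 - τ^2) 0
        linarith
      have m2 : ∫ x in A, (τ^2 + max (‖x‖ ^ 4 - τ^2) 0) ∂μ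
          = ∫ _x in A, (τ^2:ℝ) ∂μ + ∫ x in A, max (‖x‖ ^ 4 - τ^2) 0 ∂μ :=
        integral_add hconstA hinth.integrableOn
      have m3 : ∫ _x in A, (τ^2:ℝ) ∂μ ≤ ε * τ^2 := by
        rw [setIntegral_const, smul_eq_mul]
        exact mul_le_mul_of_nonneg_right hμA (sq_nonneg τ)
      have m4 : ∫ x in A, max (‖x‖ ^ 4 - τ^2) 0 ∂μ ≤ ∫ x, max (‖x‖ ^ 4 - τ^2) 0 ∂μ :=
        setIntegral_le_integral hinth (ae_of_all _ fun x => le_max_right _ _)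
      linarith
    -- exp identity
    have hexpL : rexp (2*(d:ℝ)/3) * rexp (-τ/3) = ε := by
      rw [← Real.exp_add, show 2*(d:ℝ)/3 + -τ/3 = -L from by rw [hτdef]; ring,
        Real.exp_neg, hLdef, Real.exp_log (by positivity : (0:ℝ) < 1/ε), one_div, inv_inv]
    set J := ∫ y in Set.Ioi (0:ℝ), y^(d-1) * rexp (-(y^2)/2) with hJdef
    have hJpos : 0 < J := Stmt12Aux.Jpos d hd
    have hJval := Stmt12Aux.Jval d hd
    have hnormc := Stmt12Aux.norm_const d hd
    have hπ := Real.pi_pos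
    have hc0pos : (0:ℝ) < (2*π*1) ^ (-(d:ℝ)/2) := by positivity
    -- μ-integral to volume integral
    have hμh : ∫ x, max (‖x‖ ^ 4 - τ^2) 0 ∂μ
        = ∫ x, gaussDensity d 1 x * max (‖x‖ ^ 4 - τ^2) 0 ∂(volume) := by
      rw [hμdef, stdGaussian,
        Stmt12Aux.integral_withDensity_ofReal hgmeas (Stmt12Aux.gauss_nonneg d)]
    -- radial reduction
    have hrad := MeasureTheory.integral_fun_norm_addHaar (volume : Measure (Euc d))
      (fun r : ℝ => (2 * π * 1) ^ (-(d:ℝ)/2) * rexp (-r^2/(2*1)) * max (r^4 - τ^2) 0)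
    rw [finrank_euclideanSpace_fin] at hrad
    have hptint : ∫ x : Euc d, gaussDensity d 1 x * max (‖x‖ ^ 4 - τ^2) 0 ∂volume
        = ∫ x : Euc d,
            (fun r : ℝ => (2 * π * 1) ^ (-(d:ℝ)/2) * rexp (-r^2/(2*1)) * max (r^4 - τ^2) 0)
              ‖x‖ ∂volume := by
      congr 1
    set cB := (volume (Metric.ball (0:Euc d) 1)).toReal with hcBdef
    have hcBnn : 0 ≤ cB := ENNReal.toReal_nonneg
    have hvol : ∫ x : Euc d, gaussDensity d 1 x * max (‖x‖ ^ 4 - τ^2) 0 ∂volume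
        = (d:ℝ) * cB * ((2 * π * 1) ^ (-(d:ℝ)/2)
            * ∫ y in Set.Ioi (0:ℝ), y^(d-1) * rexp (-(y^2)/2) * max (y^4 - τ^2) 0) := by
      rw [hptint, hrad, nsmul_eq_mul, smul_eq_mul]
      rw [show (∫ y in Set.Ioi (0:ℝ),
            y^(d-1) • ((2 * π * 1) ^ (-(d:ℝ)/2) * rexp (-y^2/(2*1)) * max (y^4 - τ^2) 0))
          = (2 * π * 1) ^ (-(d:ℝ)/2)
            * ∫ y in Set.Ioi (0:ℝ), y^(d-1) * rexp (-(y^2)/2) * max (y^4 - τ^2) 0 from ?_]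
      · simp only [measureReal_def, ← hcBdef]
        ring
      rw [← integral_const_mul]
      apply setIntegral_congr_fun measurableSet_Ioi
      intro y _
      show y^(d-1) • ((2 * π * 1) ^ (-(d:ℝ)/2) * rexp (-y^2/(2*1)) * max (y^4 - τ^2) 0)
        = (2 * π * 1) ^ (-(d:ℝ)/2) * (y^(d-1) * rexp (-(y^2)/2) * max (y^4 - τ^2) 0)
      rw [smul_eq_mul, show -y^2/(2*1) = -(y^2)/2 from by ring]
      ring
    -- bound the tail integral
    have hJ2le : ∫ y in Set.Ioi (0:ℝ), y^(d-1) * rexp (-(y^2)/2) * max (y^4 - τ^2) 0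
        ≤ (rexp (2*(d:ℝ)/3) * J / 3) * (9*(τ+3)*rexp (-τ/3)) := by
      have hKnn : 0 ≤ rexp (2*(d:ℝ)/3) * J / 3 := by positivity
      have mono : ∫ y in Set.Ioi (0:ℝ), y^(d-1) * rexp (-(y^2)/2) * max (y^4 - τ^2) 0
          ≤ ∫ y in Set.Ioi (0:ℝ),
              (rexp (2*(d:ℝ)/3) * J / 3) * (y * max (y^4 - τ^2) 0 * rexp (-(y^2)/3)) := by
        apply integral_mono_of_nonneg
        · filter_upwards [ae_restrict_mem measurableSet_Ioi] with y hy
          have hy0 : (0:ℝ) < y := hy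
          have : (0:ℝ) ≤ max (y^4 - τ^2) 0 := le_max_right _ _
          positivity
        · exact (Stmt12Aux.integrableOn_tail_max τ hτpos).const_mul _
        · filter_upwards [ae_restrict_mem measurableSet_Ioi] with y hy
          have hy0 : (0:ℝ) < y := hy
          rcases le_or_gt (y^4) (τ^2) with hle | hlt
          · rw [max_eq_right (by linarith)]
            simp
          · have hyτ : τ < y^2 := by nlinarith
            have hcore := Stmt12Aux.core d hd hy0 (by linarith : 2*(d:ℝ) ≤ y^2)
            rw [← hJval] at hcore
            have hsplit : rexp (-(y^2)/2) = rexp (-(y^2)/6) * rexp (-(y^2)/3) := by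
              rw [← Real.exp_add]; congr 1; ring
            have hmax : (0:ℝ) ≤ max (y^4 - τ^2) 0 * rexp (-(y^2)/3) :=
              mul_nonneg (le_max_right _ _) (Real.exp_pos _).le
            calc y^(d-1) * rexp (-(y^2)/2) * max (y^4 - τ^2) 0
                = (y^(d-1) * rexp (-(y^2)/6)) * (max (y^4 - τ^2) 0 * rexp (-(y^2)/3)) := by
                  rw [hsplit]; ring
              _ ≤ ((rexp (2*(d:ℝ)/3) * J / 3) * y) * (max (y^4 - τ^2) 0 * rexp (-(y^2)/3)) :=
                  mul_le_mul_of_nonneg_right hcore hmax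
              _ = (rexp (2*(d:ℝ)/3) * J / 3) * (y * max (y^4 - τ^2) 0 * rexp (-(y^2)/3)) := by
                  ring
      rwa [integral_const_mul, Stmt12Aux.tail_integral τ hτpos] at mono
    -- assemble the key bound
    have hone : (2 * π * 1) ^ (-(d:ℝ)/2) * (2*π) ^ ((d:ℝ)/2) = 1 := by
      rw [mul_one, ← Real.rpow_add (by positivity), show (-(d:ℝ)/2 + (d:ℝ)/2) = 0 from by ring,
        Real.rpow_zero]
    have hkey : ∫ x, max (‖x‖ ^ 4 - τ^2) 0 ∂μ ≤ 3*ε*(τ+3) := by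
      rw [hμh, hvol]
      have hdcB : (0:ℝ) ≤ (d:ℝ) * cB := mul_nonneg (Nat.cast_nonneg d) hcBnn
      calc (d:ℝ) * cB * ((2 * π * 1) ^ (-(d:ℝ)/2)
            * ∫ y in Set.Ioi (0:ℝ), y^(d-1) * rexp (-(y^2)/2) * max (y^4 - τ^2) 0)
          ≤ (d:ℝ) * cB * ((2 * π * 1) ^ (-(d:ℝ)/2)
            * ((rexp (2*(d:ℝ)/3) * J / 3) * (9*(τ+3)*rexp (-τ/3)))) := by
            apply mul_le_mul_of_nonneg_left _ hdcB
            exact mul_le_mul_of_nonneg_left hJ2le hc0pos.le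
        _ = ((d:ℝ) * cB * J) * ((2 * π * 1) ^ (-(d:ℝ)/2))
            * (3*(τ+3)*(rexp (2*(d:ℝ)/3) * rexp (-τ/3))) := by ring
        _ = (2*π) ^ ((d:ℝ)/2) * ((2 * π * 1) ^ (-(d:ℝ)/2)) * (3*(τ+3)*ε) := by
            rw [hnormc, hexpL]
        _ = 3*ε*(τ+3) := by
            rw [show (2*π) ^ ((d:ℝ)/2) * ((2 * π * 1) ^ (-(d:ℝ)/2))
              = (2 * π * 1) ^ (-(d:ℝ)/2) * (2*π) ^ ((d:ℝ)/2) from by ring, hone]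
            ring
    have hfinal : 3*ε*(τ+3) = 3*ε*τ + 9*ε := by ring
    linarith
end
end

section
/- Let P̃₀ be a probability measure supported on the closed ball B_R(0) ⊂ ℝ^d with R ≥ 1, and for t > 0 let p̃_t = (M_{m_t♯}P̃₀) * φ_{σ_t²} with m_t = e^{−t/2}, σ_t² = 1 − e^{−t}. Then for every t > 0 and every x ∈ ℝ^d: ‖∇² ln p̃_t(x)‖ ≤ R²/σ_t⁴. -/
open MeasureTheory Real
open scoped ENNReal NNReal RealInnerProductSpace BigOperators

noncomputable section

set_option maxHeartbeats 2000000
set_option synthInstance.maxHeartbeats 1000000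

/-- Operator norm bound for a symmetric operator via its quadratic form. -/
lemma opNorm_le_of_symm_of_inner_bound {d : ℕ} (T : Euc d →L[ℝ] Euc d) (M : ℝ) (hM : 0 ≤ M)
    (hsymm : ∀ u v, ⟪T u, v⟫ = ⟪T v, u⟫)
    (hbd : ∀ u, |⟪T u, u⟫| ≤ M * ‖u‖ ^ 2) : ‖T‖ ≤ M := by
  -- first: for unit-ish vectors
  have key : ∀ u v : Euc d, |⟪T u, v⟫| ≤ M * ‖u‖ * ‖v‖ := by
    have key1 : ∀ u v : Euc d, ‖u‖ = 1 → ‖v‖ = 1 → |⟪T u, v⟫| ≤ M := by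
      intro u v hu hv
      have h4 : (4 : ℝ) * ⟪T u, v⟫ = ⟪T (u + v), u + v⟫ - ⟪T (u - v), u - v⟫ := by
        have h1 := hsymm u v
        simp only [map_add, map_sub, inner_add_left, inner_add_right, inner_sub_left,
          inner_sub_right]
        ring_nf
        linarith [hsymm u v, hsymm v u]
      have b1 := hbd (u + v)
      have b2 := hbd (u - v)
      have hpar : ‖u + v‖ ^ 2 + ‖u - v‖ ^ 2 = 2 * (‖u‖ ^ 2 + ‖v‖ ^ 2) := by
        have := parallelogram_law_with_norm ℝ u v
        ring_nf
        ring_nf at this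
        linarith
      have : |(4 : ℝ) * ⟪T u, v⟫| ≤ M * ‖u + v‖ ^ 2 + M * ‖u - v‖ ^ 2 := by
        rw [h4]
        refine (abs_sub _ _).trans ?_
        gcongr
      have h2 : M * ‖u + v‖ ^ 2 + M * ‖u - v‖ ^ 2 = 4 * M := by
        rw [← mul_add, hpar, hu, hv]; ring
      rw [h2, abs_mul] at this
      simp only [abs_of_nonneg (by norm_num : (0:ℝ) ≤ 4)] at this
      linarith [abs_nonneg ⟪T u, v⟫]
    intro u v
    rcases eq_or_ne u 0 with rfl | hu
    · simp
    rcases eq_or_ne v 0 with rfl | hv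
    · simp
    have hun : ‖u‖ ≠ 0 := norm_ne_zero_iff.2 hu
    have hvn : ‖v‖ ≠ 0 := norm_ne_zero_iff.2 hv
    have := key1 (‖u‖⁻¹ • u) (‖v‖⁻¹ • v) (by simp [norm_smul, abs_of_nonneg, inv_mul_cancel₀ hun]) (by simp [norm_smul, inv_mul_cancel₀ hvn])
    rw [T.map_smul, inner_smul_left, inner_smul_right] at this
    simp only [RCLike.star_def, map_inv₀, conj_trivial, abs_mul, abs_inv, abs_norm] at this
    have h := mul_le_mul_of_nonneg_left this (by positivity : (0:ℝ) ≤ ‖u‖ * ‖v‖)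
    calc |⟪T u, v⟫| = (‖u‖ * ‖v‖) * (‖u‖⁻¹ * (‖v‖⁻¹ * |⟪T u, v⟫|)) := by
          field_simp
      _ ≤ (‖u‖ * ‖v‖) * M := h
      _ = M * ‖u‖ * ‖v‖ := by ring
  refine T.opNorm_le_bound hM fun u => ?_
  rcases eq_or_ne (T u) 0 with h0 | h0
  · simp [h0]; positivity
  have := key u (T u)
  have hT : ‖T u‖ ≠ 0 := norm_ne_zero_iff.2 h0
  have h2 : ⟪T u, T u⟫ = ‖T u‖ ^ 2 := real_inner_self_eq_norm_sq _
  rw [h2, abs_of_nonneg (by positivity)] at this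
  have h3 : ‖T u‖ * ‖T u‖ ≤ (M * ‖u‖) * ‖T u‖ := by nlinarith
  exact le_of_mul_le_mul_right (by linarith) (lt_of_le_of_ne (norm_nonneg _) (Ne.symm hT))

/-- Integrability of a.e.-bounded continuous functions w.r.t. a finite measure. -/
lemma integrable_of_ae_bound {d : ℕ} {E : Type*} [NormedAddCommGroup E]
    {ν : Measure (Euc d)} [IsFiniteMeasure ν] {B : ℝ} (hB : ∀ᵐ y ∂ν, ‖y‖ ≤ B)
    {f : Euc d → E} (hf : Continuous f) {C : ℝ} (h : ∀ y : Euc d, ‖y‖ ≤ B → ‖f y‖ ≤ C) :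
    Integrable f ν :=
  Integrable.mono' (integrable_const C) hf.aestronglyMeasurable (hB.mono fun y hy => h y hy)


section core
variable {d : ℕ}

def Kf (ν : Measure (Euc d)) (x : Euc d) : ℝ := ∫ y, Real.exp ⟪x, y⟫ ∂ν
def mf (ν : Measure (Euc d)) (x : Euc d) : Euc d := ∫ y, Real.exp ⟪x, y⟫ • y ∂ν
def dKf (ν : Measure (Euc d)) (x : Euc d) : Euc d →L[ℝ] ℝ :=
  ∫ y, Real.exp ⟪x, y⟫ • innerSL ℝ y ∂ν
def Sf (ν : Measure (Euc d)) (x : Euc d) : Euc d →L[ℝ] Euc d :=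
  ∫ y, Real.exp ⟪x, y⟫ • ((innerSL ℝ y).smulRight y) ∂ν

lemma hasFDerivAt_expInner (y x : Euc d) :
    HasFDerivAt (fun z : Euc d => Real.exp ⟪z, y⟫) (Real.exp ⟪x, y⟫ • innerSL ℝ y) x := by
  have h := ((innerSL ℝ y).hasFDerivAt (x := x)).exp
  have e1 : (fun z : Euc d => Real.exp ((innerSL ℝ y) z)) = fun z => Real.exp ⟪z, y⟫ :=
    funext fun z => by rw [innerSL_apply_apply, real_inner_comm]
  have e2 : Real.exp ((innerSL ℝ y) x) = Real.exp ⟪x, y⟫ := by rw [innerSL_apply_apply, real_inner_comm]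
  rw [e1, e2] at h; exact h

lemma smulRight_smul_comm (c : ℝ) (f : Euc d →L[ℝ] ℝ) (v : Euc d) :
    (c • f).smulRight v = c • f.smulRight v := by
  ext u
  simp [smul_smul, mul_assoc]

variable {ν : Measure (Euc d)} [IsFiniteMeasure ν] {B : ℝ}

lemma integrable_of_ae_bound' {E : Type*} [NormedAddCommGroup E]
    (hB : ∀ᵐ y ∂ν, ‖y‖ ≤ B)
    {f : Euc d → E} (hf : Continuous f) {C : ℝ} (h : ∀ y : Euc d, ‖y‖ ≤ B → ‖f y‖ ≤ C) :
    Integrable f ν :=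
  Integrable.mono' (integrable_const C) hf.aestronglyMeasurable (hB.mono fun y hy => h y hy)

lemma cont_expInner (x : Euc d) : Continuous fun y : Euc d => Real.exp ⟪x, y⟫ :=
  Real.continuous_exp.comp (Continuous.inner continuous_const continuous_id)

lemma expInner_le (x y : Euc d) {C : ℝ} (hxC : ‖x‖ * B ≤ C) (hy : ‖y‖ ≤ B) :
    Real.exp ⟪x, y⟫ ≤ Real.exp C := by
  apply Real.exp_le_exp.2
  calc ⟪x, y⟫ ≤ ‖x‖ * ‖y‖ := real_inner_le_norm x y
    _ ≤ ‖x‖ * B := by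
        apply mul_le_mul_of_nonneg_left hy (norm_nonneg x)
    _ ≤ C := hxC

lemma integrable_expInner (hB : ∀ᵐ y ∂ν, ‖y‖ ≤ B) (x : Euc d) :
    Integrable (fun y => Real.exp ⟪x, y⟫) ν := by
  refine integrable_of_ae_bound' hB (cont_expInner x) (C := Real.exp (‖x‖ * B)) fun y hy => ?_
  rw [Real.norm_eq_abs, abs_exp]
  exact expInner_le x y le_rfl hy

lemma integrable_expInner_smul (hB : ∀ᵐ y ∂ν, ‖y‖ ≤ B) (hB0 : 0 ≤ B) (x : Euc d) :
    Integrable (fun y => Real.exp ⟪x, y⟫ • y) ν := by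
  refine integrable_of_ae_bound' hB ((cont_expInner x).smul continuous_id)
    (C := Real.exp (‖x‖ * B) * B) fun y hy => ?_
  rw [norm_smul, Real.norm_eq_abs, abs_exp]
  exact mul_le_mul (expInner_le x y le_rfl hy) hy (norm_nonneg y) (exp_nonneg _)

lemma integrable_expInner_innerSL (hB : ∀ᵐ y ∂ν, ‖y‖ ≤ B) (hB0 : 0 ≤ B) (x : Euc d) :
    Integrable (fun y => Real.exp ⟪x, y⟫ • innerSL ℝ y) ν := by
  refine integrable_of_ae_bound' hB ((cont_expInner x).smul (innerSL ℝ).continuous)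
    (C := Real.exp (‖x‖ * B) * B) fun y hy => ?_
  rw [norm_smul _ (innerSL ℝ y), Real.norm_eq_abs, abs_exp, innerSL_apply_norm]
  exact mul_le_mul (expInner_le x y le_rfl hy) hy (norm_nonneg y) (exp_nonneg _)

lemma cont_smulRight : Continuous fun y : Euc d => (innerSL ℝ y).smulRight y := by
  exact (Continuous.clm_apply ((ContinuousLinearMap.smulRightL ℝ (Euc d) (Euc d)).continuous.comp
    (innerSL ℝ).continuous) continuous_id)

lemma integrable_expInner_op (hB : ∀ᵐ y ∂ν, ‖y‖ ≤ B) (hB0 : 0 ≤ B) (x : Euc d) :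
    Integrable (fun y => Real.exp ⟪x, y⟫ • ((innerSL ℝ y).smulRight y)) ν := by
  refine integrable_of_ae_bound' hB ((cont_expInner x).smul cont_smulRight)
    (C := Real.exp (‖x‖ * B) * (B * B)) fun y hy => ?_
  rw [norm_smul _ ((innerSL ℝ y).smulRight y), Real.norm_eq_abs, abs_exp,
    ContinuousLinearMap.norm_smulRight_apply, innerSL_apply_norm]
  exact mul_le_mul (expInner_le x y le_rfl hy)
    (mul_le_mul hy hy (norm_nonneg y) hB0) (by positivity) (exp_nonneg _)

lemma hasFDerivAt_Kf (hB : ∀ᵐ y ∂ν, ‖y‖ ≤ B) (hB0 : 0 ≤ B) (x : Euc d) :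
    HasFDerivAt (Kf ν) (dKf ν x) x := by
  refine hasFDerivAt_integral_of_dominated_of_fderiv_le
    (F' := fun x (y : Euc d) => Real.exp ⟪x, y⟫ • innerSL ℝ y)
    (bound := fun _ => Real.exp ((‖x‖ + 1) * B) * B) (Metric.ball_mem_nhds x zero_lt_one)
    (Filter.Eventually.of_forall fun z => (cont_expInner z).aestronglyMeasurable)
    (integrable_expInner hB x)
    (integrable_expInner_innerSL hB hB0 x).aestronglyMeasurable
    (hB.mono fun y hy => fun z hz => ?_) (integrable_const _)
    (Filter.Eventually.of_forall fun y => fun z _ => hasFDerivAt_expInner y z)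
  beta_reduce
  rw [norm_smul _ (innerSL ℝ y), Real.norm_eq_abs, abs_exp, innerSL_apply_norm]
  have hz' : ‖z‖ ≤ ‖x‖ + 1 := by
    have := mem_ball_iff_norm.1 hz
    calc ‖z‖ = ‖x + (z - x)‖ := by rw [add_sub_cancel]
      _ ≤ ‖x‖ + ‖z - x‖ := norm_add_le _ _
      _ ≤ ‖x‖ + 1 := by
          have : ‖z - x‖ ≤ 1 := le_of_lt this
          linarith
  refine mul_le_mul (expInner_le z y ?_ hy) hy (norm_nonneg y) (exp_nonneg _)
  exact mul_le_mul_of_nonneg_right hz' hB0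

lemma hasFDerivAt_mf (hB : ∀ᵐ y ∂ν, ‖y‖ ≤ B) (hB0 : 0 ≤ B) (x : Euc d) :
    HasFDerivAt (mf ν) (Sf ν x) x := by
  refine hasFDerivAt_integral_of_dominated_of_fderiv_le
    (F' := fun x (y : Euc d) => Real.exp ⟪x, y⟫ • ((innerSL ℝ y).smulRight y))
    (bound := fun _ => Real.exp ((‖x‖ + 1) * B) * (B * B)) (Metric.ball_mem_nhds x zero_lt_one)
    (Filter.Eventually.of_forall fun z => ((cont_expInner z).smul continuous_id).aestronglyMeasurable)
    (integrable_expInner_smul hB hB0 x)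
    (integrable_expInner_op hB hB0 x).aestronglyMeasurable
    (hB.mono fun y hy => fun z hz => ?_) (integrable_const _)
    (Filter.Eventually.of_forall fun y => fun z _ => ?_)
  · beta_reduce
    rw [norm_smul _ ((innerSL ℝ y).smulRight y), Real.norm_eq_abs, abs_exp,
      ContinuousLinearMap.norm_smulRight_apply, innerSL_apply_norm]
    have hz' : ‖z‖ ≤ ‖x‖ + 1 := by
      have := mem_ball_iff_norm.1 hz
      calc ‖z‖ = ‖x + (z - x)‖ := by rw [add_sub_cancel]
        _ ≤ ‖x‖ + ‖z - x‖ := norm_add_le _ _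
        _ ≤ ‖x‖ + 1 := by linarith
    refine mul_le_mul (expInner_le z y ?_ hy)
      (mul_le_mul hy hy (norm_nonneg y) hB0) (by positivity) (exp_nonneg _)
    exact mul_le_mul_of_nonneg_right hz' hB0
  · have := (hasFDerivAt_expInner y z).smul_const y
    rwa [smulRight_smul_comm] at this

lemma Kf_pos (hB : ∀ᵐ y ∂ν, ‖y‖ ≤ B) (hν0 : 0 < (ν Set.univ).toReal) (x : Euc d) :
    0 < Kf ν x := by
  have hlow : ∀ᵐ y ∂ν, Real.exp (-(‖x‖ * B)) ≤ Real.exp ⟪x, y⟫ := by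
    refine hB.mono fun y hy => Real.exp_le_exp.2 ?_
    have h1 : |⟪x, y⟫| ≤ ‖x‖ * ‖y‖ := abs_real_inner_le_norm x y
    have h2 : ‖x‖ * ‖y‖ ≤ ‖x‖ * B := mul_le_mul_of_nonneg_left hy (norm_nonneg x)
    linarith [(abs_le.1 h1).1]
  have hmono := integral_mono_ae (integrable_const (Real.exp (-(‖x‖ * B))))
    (integrable_expInner hB x) hlow
  rw [integral_const] at hmono
  calc (0:ℝ) < (ν Set.univ).toReal • Real.exp (-(‖x‖ * B)) := by
        rw [smul_eq_mul]; positivity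
    _ ≤ Kf ν x := hmono

lemma integrable_expInner_smul2 (hB : ∀ᵐ y ∂ν, ‖y‖ ≤ B) (hB0 : 0 ≤ B) (x u : Euc d) :
    Integrable (fun y => Real.exp ⟪x, y⟫ • (⟪y, u⟫ • y)) ν := by
  refine integrable_of_ae_bound' hB
    ((cont_expInner x).smul (show Continuous fun y : Euc d => ⟪y, u⟫ • y by fun_prop))
    (C := Real.exp (‖x‖ * B) * (B * ‖u‖ * B)) fun y hy => ?_
  rw [norm_smul _ (⟪y, u⟫ • y), norm_smul ⟪y, u⟫ y, Real.norm_eq_abs, abs_exp, Real.norm_eq_abs]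
  refine mul_le_mul (expInner_le x y le_rfl hy) ?_ (by positivity) (exp_nonneg _)
  have h1 : |⟪y, u⟫| ≤ ‖y‖ * ‖u‖ := abs_real_inner_le_norm y u
  have h2 : ‖y‖ * ‖u‖ ≤ B * ‖u‖ := mul_le_mul_of_nonneg_right hy (norm_nonneg u)
  have := mul_le_mul (h1.trans h2) hy (norm_nonneg y) (by positivity)
  exact this

lemma integrable_expInner_mul (hB : ∀ᵐ y ∂ν, ‖y‖ ≤ B) (hB0 : 0 ≤ B) (x u : Euc d) :
    Integrable (fun y => Real.exp ⟪x, y⟫ * ⟪y, u⟫) ν := by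
  refine integrable_of_ae_bound' hB
    ((cont_expInner x).mul (Continuous.inner continuous_id continuous_const))
    (C := Real.exp (‖x‖ * B) * (B * ‖u‖)) fun y hy => ?_
  rw [Real.norm_eq_abs, abs_mul, abs_exp]
  refine mul_le_mul (expInner_le x y le_rfl hy) ?_ (abs_nonneg _) (exp_nonneg _)
  exact (abs_real_inner_le_norm y u).trans (mul_le_mul_of_nonneg_right hy (norm_nonneg u))

lemma integrable_expInner_mul2 (hB : ∀ᵐ y ∂ν, ‖y‖ ≤ B) (hB0 : 0 ≤ B) (x u v : Euc d) :
    Integrable (fun y => Real.exp ⟪x, y⟫ * (⟪y, u⟫ * ⟪y, v⟫)) ν := by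
  refine integrable_of_ae_bound' hB
    ((cont_expInner x).mul ((Continuous.inner continuous_id continuous_const).mul
      (Continuous.inner continuous_id continuous_const)))
    (C := Real.exp (‖x‖ * B) * (B * ‖u‖ * (B * ‖v‖))) fun y hy => ?_
  rw [Real.norm_eq_abs, abs_mul, abs_exp, abs_mul]
  refine mul_le_mul (expInner_le x y le_rfl hy) ?_ (by positivity) (exp_nonneg _)
  refine mul_le_mul ((abs_real_inner_le_norm y u).trans ?_)
    ((abs_real_inner_le_norm y v).trans ?_) (abs_nonneg _) (by positivity)
  · exact mul_le_mul_of_nonneg_right hy (norm_nonneg u)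
  · exact mul_le_mul_of_nonneg_right hy (norm_nonneg v)

lemma dKf_apply (hB : ∀ᵐ y ∂ν, ‖y‖ ≤ B) (hB0 : 0 ≤ B) (x u : Euc d) :
    dKf ν x u = ∫ y, Real.exp ⟪x, y⟫ * ⟪y, u⟫ ∂ν := by
  rw [dKf, ContinuousLinearMap.integral_apply (integrable_expInner_innerSL hB hB0 x) u]
  congr 1

lemma inner_mf (hB : ∀ᵐ y ∂ν, ‖y‖ ≤ B) (hB0 : 0 ≤ B) (x u : Euc d) :
    ⟪mf ν x, u⟫ = ∫ y, Real.exp ⟪x, y⟫ * ⟪y, u⟫ ∂ν := by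
  rw [real_inner_comm u (mf ν x), mf, ← integral_inner (integrable_expInner_smul hB hB0 x) u]
  congr 1
  funext y
  rw [real_inner_smul_right, real_inner_comm u y]

lemma inner_Sf (hB : ∀ᵐ y ∂ν, ‖y‖ ≤ B) (hB0 : 0 ≤ B) (x u v : Euc d) :
    ⟪Sf ν x u, v⟫ = ∫ y, Real.exp ⟪x, y⟫ * (⟪y, u⟫ * ⟪y, v⟫) ∂ν := by
  have h1 : Sf ν x u = ∫ y, Real.exp ⟪x, y⟫ • (⟪y, u⟫ • y) ∂ν := by
    rw [Sf, ContinuousLinearMap.integral_apply (integrable_expInner_op hB hB0 x) u]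
    congr 1
  rw [h1, real_inner_comm v _, ← integral_inner (integrable_expInner_smul2 hB hB0 x u) v]
  congr 1
  funext y
  rw [real_inner_smul_right, real_inner_smul_right, real_inner_comm v y]

lemma sq_div_le_I2 (hB : ∀ᵐ y ∂ν, ‖y‖ ≤ B) (hB0 : 0 ≤ B) (hν0 : 0 < (ν Set.univ).toReal)
    (x u : Euc d) :
    (∫ y, Real.exp ⟪x, y⟫ * ⟪y, u⟫ ∂ν) ^ 2 / Kf ν x
      ≤ ∫ y, Real.exp ⟪x, y⟫ * (⟪y, u⟫ * ⟪y, u⟫) ∂ν := by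
  have hK : 0 < Kf ν x := Kf_pos hB hν0 x
  set K := Kf ν x with hKdef
  set I1 := ∫ y, Real.exp ⟪x, y⟫ * ⟪y, u⟫ ∂ν with hI1
  set a := I1 / K with ha
  have h0 : 0 ≤ ∫ y, Real.exp ⟪x, y⟫ * (⟪y, u⟫ - a) ^ 2 ∂ν :=
    integral_nonneg fun y => by positivity
  have hexpand : (fun y : Euc d => Real.exp ⟪x, y⟫ * (⟪y, u⟫ - a) ^ 2)
      = fun y => (Real.exp ⟪x, y⟫ * (⟪y, u⟫ * ⟪y, u⟫) - (2 * a) * (Real.exp ⟪x, y⟫ * ⟪y, u⟫))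
        + (a ^ 2) * Real.exp ⟪x, y⟫ := by
    funext y; ring
  rw [hexpand] at h0
  have hsplit : (∫ y, ((Real.exp ⟪x, y⟫ * (⟪y, u⟫ * ⟪y, u⟫)
      - (2 * a) * (Real.exp ⟪x, y⟫ * ⟪y, u⟫)) + (a ^ 2) * Real.exp ⟪x, y⟫) ∂ν)
      = (∫ y, Real.exp ⟪x, y⟫ * (⟪y, u⟫ * ⟪y, u⟫) ∂ν) - (2 * a) * I1 + (a ^ 2) * K := by
    have hfg : Integrable (fun y => Real.exp ⟪x, y⟫ * (⟪y, u⟫ * ⟪y, u⟫)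
        - (2 * a) * (Real.exp ⟪x, y⟫ * ⟪y, u⟫)) ν := by
      exact (integrable_expInner_mul2 hB hB0 x u u).sub
        ((integrable_expInner_mul hB hB0 x u).const_mul _)
    have hg : Integrable (fun y : Euc d => (a ^ 2) * Real.exp ⟪x, y⟫) ν := by
      exact (integrable_expInner hB x).const_mul _
    rw [integral_add hfg hg,
      integral_sub (integrable_expInner_mul2 hB hB0 x u u)
        ((integrable_expInner_mul hB hB0 x u).const_mul _),
      integral_const_mul, integral_const_mul]
    rfl
  rw [hsplit] at h0
  -- h0 : 0 ≤ I2 - 2*a*I1 + a^2*K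
  have ha2 : a = I1 / K := ha
  have hKne : K ≠ 0 := ne_of_gt hK
  have : I1 ^ 2 / K = 2 * a * I1 - a ^ 2 * K := by
    rw [ha2]
    field_simp
    ring
  rw [this]
  linarith

lemma I2_le (hB : ∀ᵐ y ∂ν, ‖y‖ ≤ B) (hB0 : 0 ≤ B) (x u : Euc d) :
    ∫ y, Real.exp ⟪x, y⟫ * (⟪y, u⟫ * ⟪y, u⟫) ∂ν ≤ B ^ 2 * ‖u‖ ^ 2 * Kf ν x := by
  have hmono := integral_mono_ae (integrable_expInner_mul2 hB hB0 x u u)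
    ((integrable_expInner hB x).const_mul (B ^ 2 * ‖u‖ ^ 2)) ?_
  · rwa [integral_const_mul] at hmono
  · refine hB.mono fun y hy => ?_
    have h1 : |⟪y, u⟫| ≤ B * ‖u‖ :=
      (abs_real_inner_le_norm y u).trans (mul_le_mul_of_nonneg_right hy (norm_nonneg u))
    have h2 : ⟪y, u⟫ * ⟪y, u⟫ ≤ B ^ 2 * ‖u‖ ^ 2 := by
      nlinarith [abs_mul_abs_self ⟪y, u⟫, abs_nonneg ⟪y, u⟫,
        mul_le_mul h1 h1 (abs_nonneg _) (by positivity : (0:ℝ) ≤ B * ‖u‖)]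
    have h3 : 0 ≤ Real.exp ⟪x, y⟫ := exp_nonneg _
    calc Real.exp ⟪x, y⟫ * (⟪y, u⟫ * ⟪y, u⟫) ≤ Real.exp ⟪x, y⟫ * (B ^ 2 * ‖u‖ ^ 2) :=
          mul_le_mul_of_nonneg_left h2 h3
      _ = B ^ 2 * ‖u‖ ^ 2 * Real.exp ⟪x, y⟫ := by ring

end core

/-- Let `P̃₀` be a probability measure supported on `B_R(0) ⊆ ℝ^d` with `R ≥ 1`,
and let `p̃_t` be the forward OU density. Then for all `t > 0` and `x`:
`‖∇² ln p̃_t(x)‖ ≤ R²/σ_t⁴`. -/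
theorem stmt_14 {d : ℕ} (P : Measure (Euc d)) [IsProbabilityMeasure P]
    (R : ℝ) (hR : 1 ≤ R)
    (hsupp : P (Metric.closedBall 0 R)ᶜ = 0)
    (t : ℝ) (ht : 0 < t) (x : Euc d) :
    ‖fderiv ℝ (gradient (fun y => Real.log (ouDensity P t y))) x‖ ≤
      R ^ 2 / (1 - Real.exp (-t)) ^ 2 := by
  have hexp1 : Real.exp (-t) < 1 := by
    rw [Real.exp_lt_one_iff]; linarith
  set σ2 : ℝ := 1 - Real.exp (-t) with hσ2def
  have hσ2 : 0 < σ2 := by rw [hσ2def]; linarith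
  have hσ2le1 : σ2 ≤ 1 := by rw [hσ2def]; have := Real.exp_pos (-t); linarith
  clear_value σ2
  have hσ2ne : σ2 ≠ 0 := ne_of_gt hσ2
  set c : ℝ := Real.exp (-t / 2) with hcdef
  have hc0 : 0 < c := Real.exp_pos _
  have hc1 : c ≤ 1 := by
    rw [hcdef]; exact Real.exp_le_one_iff.2 (by linarith)
  set μ : Measure (Euc d) := P.map (fun z : Euc d => c • z) with hμdef
  have hmeas_smul : Measurable (fun z : Euc d => c • z) := measurable_id.const_smul c
  haveI : IsProbabilityMeasure μ := by
    rw [hμdef]; exact Measure.isProbabilityMeasure_map hmeas_smul.aemeasurable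
  have hPae : ∀ᵐ z ∂P, ‖z‖ ≤ R := by
    have h1 : ∀ᵐ z ∂P, z ∈ Metric.closedBall (0 : Euc d) R := by
      rw [MeasureTheory.ae_iff]
      exact hsupp
    exact h1.mono fun z hz => by
      simpa [mem_closedBall_zero_iff] using hz
  have hμR : ∀ᵐ y ∂μ, ‖y‖ ≤ R := by
    rw [hμdef, MeasureTheory.ae_map_iff hmeas_smul.aemeasurable
      ((isClosed_le continuous_norm continuous_const).measurableSet)]
    refine hPae.mono fun z hz => ?_
    rw [norm_smul, Real.norm_eq_abs, abs_of_pos hc0]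
    calc c * ‖z‖ ≤ 1 * R := mul_le_mul hc1 hz (norm_nonneg z) zero_le_one
      _ = R := one_mul R
  set w : Euc d → ℝ≥0 := fun y => Real.toNNReal (Real.exp (-‖y‖ ^ 2 / (2 * σ2))) with hwdef
  have hwmeas : Measurable w := by
    rw [hwdef]
    exact (continuous_real_toNNReal.comp
      (Real.continuous_exp.comp ((continuous_norm.pow 2).neg.div_const _))).measurable
  set ν : Measure (Euc d) :=
    (μ.withDensity (fun y => (w y : ℝ≥0∞))).map (fun y : Euc d => (σ2)⁻¹ • y) with hνdef
  have hmeas_smul2 : Measurable (fun y : Euc d => (σ2)⁻¹ • y) := measurable_id.const_smul (σ2)⁻¹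
  have hν_univ : ν Set.univ = ∫⁻ y, (w y : ℝ≥0∞) ∂μ := by
    rw [hνdef, Measure.map_apply hmeas_smul2 MeasurableSet.univ, Set.preimage_univ,
      withDensity_apply _ MeasurableSet.univ, Measure.restrict_univ]
  have hwle1 : ∀ y : Euc d, (w y : ℝ≥0∞) ≤ 1 := by
    intro y
    have hexp : Real.exp (-‖y‖ ^ 2 / (2 * σ2)) ≤ 1 := by
      apply Real.exp_le_one_iff.2
      have h0 : 0 ≤ ‖y‖ ^ 2 / (2 * σ2) := by positivity
      rw [neg_div]; linarith
    have h1 : w y ≤ Real.toNNReal 1 := by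
      rw [hwdef]; exact Real.toNNReal_mono hexp
    rw [Real.toNNReal_one] at h1
    exact_mod_cast h1
  have hνle : ν Set.univ ≤ 1 := by
    rw [hν_univ]
    calc ∫⁻ y, (w y : ℝ≥0∞) ∂μ ≤ ∫⁻ _, 1 ∂μ := lintegral_mono hwle1
      _ = 1 := by rw [lintegral_one, measure_univ]
  haveI : IsFiniteMeasure ν := ⟨lt_of_le_of_lt hνle ENNReal.one_lt_top⟩
  have hν0 : 0 < (ν Set.univ).toReal := by
    have hlow : ENNReal.ofReal (Real.exp (-R ^ 2 / (2 * σ2))) * μ Set.univ ≤ ν Set.univ := by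
      rw [hν_univ]
      calc ENNReal.ofReal (Real.exp (-R ^ 2 / (2 * σ2))) * μ Set.univ
          = ∫⁻ _, ENNReal.ofReal (Real.exp (-R ^ 2 / (2 * σ2))) ∂μ := by
            rw [lintegral_const]
        _ ≤ ∫⁻ y, (w y : ℝ≥0∞) ∂μ := by
            refine lintegral_mono_ae (hμR.mono fun y hy => ?_)
            have hcoe : (w y : ℝ≥0∞) = ENNReal.ofReal (Real.exp (-‖y‖ ^ 2 / (2 * σ2))) := rfl
            rw [hcoe]
            apply ENNReal.ofReal_le_ofReal
            apply Real.exp_le_exp.2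
            have hsq : ‖y‖ ^ 2 ≤ R ^ 2 := by
              have := norm_nonneg y
              nlinarith
            rw [neg_div, neg_div, neg_le_neg_iff]
            gcongr
    have hpos : (0 : ℝ≥0∞) < ν Set.univ := by
      refine lt_of_lt_of_le ?_ hlow
      rw [measure_univ, mul_one]
      exact ENNReal.ofReal_pos.2 (Real.exp_pos _)
    exact ENNReal.toReal_pos hpos.ne' (lt_of_le_of_lt hνle ENNReal.one_lt_top).ne
  set B : ℝ := R / σ2 with hBdef
  have hB0 : 0 ≤ B := by
    rw [hBdef]; positivity
  have hνB : ∀ᵐ y ∂ν, ‖y‖ ≤ B := by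
    rw [hνdef, MeasureTheory.ae_map_iff hmeas_smul2.aemeasurable
      ((isClosed_le continuous_norm continuous_const).measurableSet)]
    refine Filter.Eventually.filter_mono ((withDensity_absolutelyContinuous μ _).ae_le)
      (hμR.mono fun y hy => ?_)
    rw [norm_smul, Real.norm_eq_abs, abs_of_pos (inv_pos.2 hσ2), hBdef, div_eq_inv_mul]
    exact mul_le_mul_of_nonneg_left hy (inv_nonneg.2 hσ2.le)
  set C : ℝ := (2 * π * σ2) ^ (-(d : ℝ) / 2) with hCdef
  have hC : 0 < C := by
    rw [hCdef]
    exact Real.rpow_pos_of_pos (by positivity) _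
  have hchg : ∀ z : Euc d, Kf ν z = ∫ y, (w y : ℝ) * Real.exp ⟪z, (σ2)⁻¹ • y⟫ ∂μ := by
    intro z
    rw [Kf, hνdef, integral_map hmeas_smul2.aemeasurable (cont_expInner z).aestronglyMeasurable,
      integral_withDensity_eq_integral_smul hwmeas _]
    congr 1
  have hK : ∀ z, 0 < Kf ν z := fun z => Kf_pos hνB hν0 z
  have hid : ∀ z : Euc d, ouDensity P t z = C * (Real.exp (-‖z‖ ^ 2 / (2 * σ2)) * Kf ν z) := by
    intro z
    rw [ouDensity]
    rw [show (fun z : Euc d => Real.exp (-t / 2) • z) = fun z : Euc d => c • z from rfl]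
    rw [← hμdef]
    have hpt : ∀ y : Euc d, gaussDensity d (1 - Real.exp (-t)) (z - y)
        = C * (Real.exp (-‖z‖ ^ 2 / (2 * σ2)) * ((w y : ℝ) * Real.exp ⟪z, (σ2)⁻¹ • y⟫)) := by
      intro y
      rw [gaussDensity, ← hσ2def, ← hCdef]
      congr 1
      have hcoe : (w y : ℝ) = Real.exp (-‖y‖ ^ 2 / (2 * σ2)) := by
        rw [hwdef]
        exact Real.coe_toNNReal _ (Real.exp_nonneg _)
      rw [hcoe, ← Real.exp_add, ← Real.exp_add]
      congr 1
      rw [norm_sub_sq_real, real_inner_smul_right]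
      field_simp
      ring
    calc (∫ y, gaussDensity d (1 - Real.exp (-t)) (z - y) ∂μ)
        = ∫ y, C * (Real.exp (-‖z‖ ^ 2 / (2 * σ2)) * ((w y : ℝ) * Real.exp ⟪z, (σ2)⁻¹ • y⟫)) ∂μ := by
          congr 1
          funext y
          exact hpt y
      _ = C * (Real.exp (-‖z‖ ^ 2 / (2 * σ2)) * ∫ y, (w y : ℝ) * Real.exp ⟪z, (σ2)⁻¹ • y⟫ ∂μ) := by
          rw [integral_const_mul, integral_const_mul]
      _ = C * (Real.exp (-‖z‖ ^ 2 / (2 * σ2)) * Kf ν z) := by rw [← hchg z]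
  -- gradient identity
  have hgrad : ∀ z : Euc d, HasGradientAt (fun y => Real.log (ouDensity P t y))
      ((-(σ2)⁻¹) • z + (Kf ν z)⁻¹ • mf ν z) z := by
    intro z
    have hfun : (fun y => Real.log (ouDensity P t y))
        = fun y : Euc d => Real.log C + (-(2 * σ2)⁻¹) * ⟪y, y⟫ + Real.log (Kf ν y) := by
      funext y
      rw [hid y, Real.log_mul (ne_of_gt hC) (ne_of_gt (mul_pos (Real.exp_pos _) (hK y))),
        Real.log_mul (ne_of_gt (Real.exp_pos _)) (ne_of_gt (hK y)), Real.log_exp,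
        real_inner_self_eq_norm_sq]
      ring_nf
    have h1 : HasFDerivAt (fun y : Euc d => ⟪y, y⟫)
        ((fderivInnerCLM ℝ ((z, z) : Euc d × Euc d)).comp
          ((ContinuousLinearMap.id ℝ (Euc d)).prod (ContinuousLinearMap.id ℝ (Euc d)))) z :=
      (hasFDerivAt_id z).inner ℝ (hasFDerivAt_id z)
    have h2 := h1.const_mul (-(2 * σ2)⁻¹)
    have h3 := (hasFDerivAt_Kf hνB hB0 z).log (ne_of_gt (hK z))
    have h4 := ((hasFDerivAt_const (Real.log C) z).add h2).add h3
    have hD : (InnerProductSpace.toDual ℝ (Euc d)) ((-(σ2)⁻¹) • z + (Kf ν z)⁻¹ • mf ν z)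
        = (0 + (-(2 * σ2)⁻¹) • ((fderivInnerCLM ℝ ((z, z) : Euc d × Euc d)).comp
            ((ContinuousLinearMap.id ℝ (Euc d)).prod (ContinuousLinearMap.id ℝ (Euc d))))
          + (Kf ν z)⁻¹ • dKf ν z) := by
      apply ContinuousLinearMap.ext
      intro u
      rw [InnerProductSpace.toDual_apply_apply]
      simp only [ContinuousLinearMap.add_apply, ContinuousLinearMap.zero_apply,
        ContinuousLinearMap.coe_smul', Pi.smul_apply, ContinuousLinearMap.comp_apply,
        ContinuousLinearMap.prod_apply, ContinuousLinearMap.id_apply, fderivInnerCLM_apply,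
        smul_eq_mul]
      rw [inner_add_left, real_inner_smul_left, real_inner_smul_left,
        inner_mf hνB hB0 z u, ← dKf_apply hνB hB0 z u, real_inner_comm u z]
      have h2σ : -(σ2⁻¹ * ⟪z, u⟫) = -(2 * σ2)⁻¹ * (⟪z, u⟫ + ⟪z, u⟫) := by
        field_simp
        ring
      linear_combination h2σ
    rw [hfun, hasGradientAt_iff_hasFDerivAt, hD]
    exact h4
  have hgradeq : gradient (fun y => Real.log (ouDensity P t y))
      = fun z : Euc d => (-(σ2)⁻¹) • z + (Kf ν z)⁻¹ • mf ν z := gradient_eq hgrad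
  -- second derivative
  have hid' : HasFDerivAt (fun z : Euc d => (-(σ2)⁻¹) • z)
      ((-(σ2)⁻¹) • ContinuousLinearMap.id ℝ (Euc d)) x :=
    ((-(σ2)⁻¹) • ContinuousLinearMap.id ℝ (Euc d)).hasFDerivAt
  have hKinv : HasFDerivAt (fun z : Euc d => (Kf ν z)⁻¹)
      ((-(Kf ν x ^ 2)⁻¹) • dKf ν x) x :=
    (hasDerivAt_inv (ne_of_gt (hK x))).comp_hasFDerivAt x (hasFDerivAt_Kf hνB hB0 x)
  have hsm := hKinv.smul (hasFDerivAt_mf hνB hB0 x)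
  have hT := hid'.add hsm
  rw [hgradeq, show (fun z : Euc d => (-(σ2)⁻¹) • z + (Kf ν z)⁻¹ • mf ν z) = ((fun z : Euc d => (-(σ2)⁻¹) • z) + (fun z : Euc d => (Kf ν z)⁻¹) • mf ν) from rfl, hT.fderiv]
  -- quadratic form computation
  set T := (-(σ2)⁻¹) • ContinuousLinearMap.id ℝ (Euc d)
    + ((Kf ν x)⁻¹ • Sf ν x + ((-(Kf ν x ^ 2)⁻¹) • dKf ν x).smulRight (mf ν x)) with hTdef
  have hTuv : ∀ u v : Euc d, ⟪T u, v⟫ = -(σ2)⁻¹ * ⟪u, v⟫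
      + ((Kf ν x)⁻¹ * (∫ y, Real.exp ⟪x, y⟫ * (⟪y, u⟫ * ⟪y, v⟫) ∂ν)
        + (-(Kf ν x ^ 2)⁻¹ * (∫ y, Real.exp ⟪x, y⟫ * ⟪y, u⟫ ∂ν))
          * (∫ y, Real.exp ⟪x, y⟫ * ⟪y, v⟫ ∂ν)) := by
    intro u v
    rw [hTdef]
    simp only [ContinuousLinearMap.add_apply, ContinuousLinearMap.coe_smul', Pi.smul_apply,
      ContinuousLinearMap.id_apply, ContinuousLinearMap.smulRight_apply]
    rw [inner_add_left, real_inner_smul_left, inner_add_left, real_inner_smul_left,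
      inner_Sf hνB hB0 x u v, real_inner_smul_left, inner_mf hνB hB0 x v,
      dKf_apply hνB hB0 x u, smul_eq_mul]
  have hsymm : ∀ u v : Euc d, ⟪T u, v⟫ = ⟪T v, u⟫ := by
    intro u v
    rw [hTuv u v, hTuv v u, real_inner_comm u v]
    have hsw : (∫ y, Real.exp ⟪x, y⟫ * (⟪y, u⟫ * ⟪y, v⟫) ∂ν)
        = ∫ y, Real.exp ⟪x, y⟫ * (⟪y, v⟫ * ⟪y, u⟫) ∂ν := by
      congr 1
      funext y
      ring
    rw [hsw]
    ring
  have hbd : ∀ u : Euc d, |⟪T u, u⟫| ≤ B ^ 2 * ‖u‖ ^ 2 := by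
    intro u
    rw [hTuv u u, real_inner_self_eq_norm_sq]
    have hKx := hK x
    have hI21 := sq_div_le_I2 hνB hB0 hν0 x u
    have hI2le := I2_le hνB hB0 x u
    set K := Kf ν x with hKdef2
    set I1 := ∫ y, Real.exp ⟪x, y⟫ * ⟪y, u⟫ ∂ν with hI1def
    set I2 := ∫ y, Real.exp ⟪x, y⟫ * (⟪y, u⟫ * ⟪y, u⟫) ∂ν with hI2def
    have hInn : 0 ≤ K⁻¹ * I2 + (-(K ^ 2)⁻¹ * I1) * I1 := by
      have h' : I1 ^ 2 ≤ I2 * K := by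
        rw [div_le_iff₀ hKx] at hI21
        linarith
      have heq : K⁻¹ * I2 + (-(K ^ 2)⁻¹ * I1) * I1 = (I2 * K - I1 ^ 2) / K ^ 2 := by
        field_simp
        ring
      rw [heq]
      apply div_nonneg (by linarith) (by positivity)
    have hup : K⁻¹ * I2 + (-(K ^ 2)⁻¹ * I1) * I1 ≤ B ^ 2 * ‖u‖ ^ 2 := by
      have h1 : K⁻¹ * I2 ≤ B ^ 2 * ‖u‖ ^ 2 := by
        rw [inv_mul_le_iff₀ hKx]
        calc I2 ≤ B ^ 2 * ‖u‖ ^ 2 * K := hI2le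
          _ = K * (B ^ 2 * ‖u‖ ^ 2) := by ring
      have h2 : (-(K ^ 2)⁻¹ * I1) * I1 ≤ 0 := by
        have : (-(K ^ 2)⁻¹ * I1) * I1 = -(I1 ^ 2 / K ^ 2) := by
          field_simp
        rw [this]
        have : 0 ≤ I1 ^ 2 / K ^ 2 := by positivity
        linarith
      linarith
    have hσ2inv_le : (σ2)⁻¹ ≤ B ^ 2 := by
      rw [hBdef, div_pow, le_div_iff₀ (by positivity : (0:ℝ) < σ2 ^ 2)]
      have hR2 : (1 : ℝ) ≤ R ^ 2 := by nlinarith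
      have heq : (σ2)⁻¹ * σ2 ^ 2 = σ2 := by
        field_simp [sq]
      rw [heq]
      exact le_trans hσ2le1 hR2
    have hterm : (σ2)⁻¹ * ‖u‖ ^ 2 ≤ B ^ 2 * ‖u‖ ^ 2 :=
      mul_le_mul_of_nonneg_right hσ2inv_le (sq_nonneg _)
    rw [abs_le]
    constructor
    · nlinarith [sq_nonneg ‖u‖]
    · nlinarith [sq_nonneg ‖u‖, inv_pos.2 hσ2, sq_nonneg ‖u‖]
  have hM0 : (0 : ℝ) ≤ B ^ 2 := sq_nonneg B
  have hfin : R ^ 2 / σ2 ^ 2 = B ^ 2 := by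
    rw [hBdef, div_pow]
  rw [hfin]
  exact opNorm_le_of_symm_of_inner_bound T (B ^ 2) hM0 hsymm hbd
end
end

section
/- Let P̃₀ be a probability measure supported on the closed ball B_R(0) ⊂ ℝ^d, let T > 0, and let p̃_T = (M_{e^{−T/2}♯}P̃₀) * φ_{1−e^{−T}} be the forward density at time T. Then χ²(N(0, (1−e^{−T})I_d) ‖ p̃_T) ≤ exp(R²e^{−T}/(1 − e^{−T})). In particular, for 0 < ε < 1/2 and T ≥ max{ln(4R²/ε²), 1}, one has χ²(N(0,(1−e^{−T})I_d) ‖ p̃_T) ≤ ε². -/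
open MeasureTheory Real
open scoped ENNReal RealInnerProductSpace BigOperators

noncomputable section

section aux
variable {V : Type*} [NormedAddCommGroup V] [InnerProductSpace ℝ V] [FiniteDimensional ℝ V]
  [MeasurableSpace V] [BorelSpace V]

omit [FiniteDimensional ℝ V] [MeasurableSpace V] [BorelSpace V] in
theorem my_cast (b c : ℝ) (w v : V) :
    (-(b:ℂ) * ‖v‖ ^ 2 + (c:ℂ) * ⟪w, v⟫) = ((-b * ‖v‖ ^ 2 + c * ⟪w, v⟫ : ℝ) : ℂ) := by
  push_cast; ring

theorem my_integrable_rexp {b : ℝ} (hb : 0 < b) (c : ℝ) (w : V) :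
    Integrable (fun v : V ↦ rexp (-b * ‖v‖ ^ 2 + c * ⟪w, v⟫)) := by
  have h := (GaussianFourier.integrable_cexp_neg_mul_sq_norm_add (V := V)
    (show 0 < (b:ℂ).re by simpa using hb) (c : ℂ) w).norm
  convert h using 2 with v
  rw [Complex.norm_exp, my_cast, Complex.ofReal_re]

theorem my_integral_rexp {b : ℝ} (hb : 0 < b) (c : ℝ) (w : V) :
    ∫ v : V, rexp (-b * ‖v‖ ^ 2 + c * ⟪w, v⟫) =
      (π / b) ^ ((Module.finrank ℝ V : ℝ) / 2) * rexp (c ^ 2 * ‖w‖ ^ 2 / (4 * b)) := by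
  rw [← Complex.ofReal_inj]
  have h := GaussianFourier.integral_cexp_neg_mul_sq_norm_add (V := V)
    (show 0 < (b:ℂ).re by simpa using hb) (c : ℂ) w
  have key : (↑(∫ v : V, rexp (-b * ‖v‖ ^ 2 + c * ⟪w, v⟫)) : ℂ)
      = ∫ v : V, Complex.exp (-(b:ℂ) * ‖v‖ ^ 2 + (c:ℂ) * ⟪w, v⟫) := by
    rw [show ((↑(∫ v : V, rexp (-b * ‖v‖ ^ 2 + c * ⟪w, v⟫)) : ℂ))
        = Complex.ofRealLI (∫ v : V, rexp (-b * ‖v‖ ^ 2 + c * ⟪w, v⟫)) from rfl,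
      ← Complex.ofRealLI.integral_comp_comm]
    congr with v
    rw [show (Complex.ofRealLI (rexp (-b * ‖v‖ ^ 2 + c * ⟪w, v⟫)) : ℂ)
        = ((rexp (-b * ‖v‖ ^ 2 + c * ⟪w, v⟫) : ℝ) : ℂ) from rfl, Complex.ofReal_exp, my_cast]
  rw [key, h, Complex.ofReal_mul, Complex.ofReal_cpow (by positivity), Complex.ofReal_exp]
  push_cast
  congr 2
end aux

theorem one_le_lintegral_mul_lintegral_inv {α : Type*} [MeasurableSpace α] (μ : Measure α)
    [IsProbabilityMeasure μ] {f : α → ℝ≥0∞} (hf : AEMeasurable f μ)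
    (h0 : ∀ a, f a ≠ 0) (htop : ∀ a, f a ≠ ∞) :
    1 ≤ (∫⁻ a, f a ∂μ) * ∫⁻ a, (f a)⁻¹ ∂μ := by
  have hpq : Real.HolderConjugate 2 2 := Real.HolderConjugate.two_two
  have key := ENNReal.lintegral_mul_le_Lp_mul_Lq μ hpq
    (f := fun a => f a ^ (1/2 : ℝ)) (g := fun a => f a ^ (-(1/2) : ℝ))
    (hf.pow_const _) (hf.pow_const _)
  have h1 : ∀ a, (fun a => f a ^ (1/2 : ℝ)) a * (fun a => f a ^ (-(1/2) : ℝ)) a = 1 := by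
    intro a
    rw [← ENNReal.rpow_add _ _ (h0 a) (htop a)]
    norm_num
  have h2 : (∫⁻ a, ((fun a => f a ^ (1/2 : ℝ)) * fun a => f a ^ (-(1/2) : ℝ)) a ∂μ) = 1 := by
    simp only [Pi.mul_apply]
    rw [lintegral_congr h1]
    simp
  rw [h2] at key
  simp only [← ENNReal.rpow_natCast, ← ENNReal.rpow_mul] at key
  norm_num at key
  simp only [ENNReal.rpow_one, ENNReal.rpow_neg_one] at key
  calc (1:ℝ≥0∞) = (1:ℝ≥0∞) ^ (2:ℝ) := by norm_num
  _ ≤ ((∫⁻ a, f a ∂μ) ^ (1/(2:ℝ)) * (∫⁻ a, (f a)⁻¹ ∂μ) ^ (1/(2:ℝ))) ^ (2:ℝ) := by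
      exact ENNReal.rpow_le_rpow key (by norm_num)
  _ = (∫⁻ a, f a ∂μ) * ∫⁻ a, (f a)⁻¹ ∂μ := by
      rw [ENNReal.mul_rpow_of_nonneg _ _ (by norm_num), ← ENNReal.rpow_mul, ← ENNReal.rpow_mul]
      norm_num

theorem main_aux {d : ℕ} (μ : Measure (Euc d)) [IsProbabilityMeasure μ] {s : ℝ} (hs : 0 < s)
    {ρ : ℝ} (hρ : 0 ≤ ρ) (hae : ∀ᵐ y ∂μ, ‖y‖ ≤ ρ) :
    ∫ x, gaussDensity d s x ^ 2 / (∫ y, gaussDensity d s (x - y) ∂μ) ≤ Real.exp (ρ ^ 2 / s) := by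
  have hπ := Real.pi_pos
  have hC : 0 < (2*π*s) ^ (-(d:ℝ)/2) := Real.rpow_pos_of_pos (by positivity) _
  have hgpos : ∀ x : Euc d, 0 < gaussDensity d s x := fun x => mul_pos hC (Real.exp_pos _)
  have hgcont : Continuous (gaussDensity d s) := by
    unfold gaussDensity; fun_prop
  have hgle : ∀ x : Euc d, gaussDensity d s x ≤ (2*π*s) ^ (-(d:ℝ)/2) := by
    intro x
    have : rexp (-‖x‖ ^ 2 / (2 * s)) ≤ 1 := by
      rw [Real.exp_le_one_iff]
      have : (0:ℝ) ≤ ‖x‖^2 := sq_nonneg _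
      have h2s : (0:ℝ) < 2*s := by linarith
      exact div_nonpos_of_nonpos_of_nonneg (by linarith) h2s.le
    calc gaussDensity d s x = (2*π*s) ^ (-(d:ℝ)/2) * rexp (-‖x‖ ^ 2 / (2 * s)) := rfl
    _ ≤ (2*π*s) ^ (-(d:ℝ)/2) * 1 := by nlinarith
    _ = _ := mul_one _
  set p : Euc d → ℝ := fun x => ∫ y, gaussDensity d s (x - y) ∂μ with hp_def
  set a : Euc d → Euc d → ℝ≥0∞ := fun x y => ENNReal.ofReal (gaussDensity d s (x - y))
    with ha_def
  have hamC : ∀ x : Euc d, Continuous (fun y => gaussDensity d s (x - y)) :=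
    fun x => hgcont.comp (continuous_const.sub continuous_id)
  have ham : ∀ x, AEMeasurable (a x) μ :=
    fun x => (ENNReal.measurable_ofReal.comp (hamC x).measurable).aemeasurable
  have hAtop : ∀ x, ∫⁻ y, a x y ∂μ ≠ ∞ := by
    intro x
    have : ∫⁻ y, a x y ∂μ ≤ ENNReal.ofReal ((2*π*s) ^ (-(d:ℝ)/2)) := by
      calc ∫⁻ y, a x y ∂μ ≤ ∫⁻ _, ENNReal.ofReal ((2*π*s) ^ (-(d:ℝ)/2)) ∂μ :=
        lintegral_mono (fun y => ENNReal.ofReal_le_ofReal (hgle _))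
      _ = ENNReal.ofReal ((2*π*s) ^ (-(d:ℝ)/2)) := by simp
    exact (lt_of_le_of_lt this ENNReal.ofReal_lt_top).ne
  have hA0 : ∀ x, ∫⁻ y, a x y ∂μ ≠ 0 := by
    intro x
    rw [← pos_iff_ne_zero, lintegral_pos_iff_support
      (show Measurable (fun y => a x y) from (hamC x).measurable.ennreal_ofReal)]
    have : (Function.support fun y => a x y) = Set.univ := by
      ext y; simp [ha_def, Function.mem_support, (ENNReal.ofReal_pos.mpr (hgpos _)).ne']
    rw [this]
    simp
  have hpA : ∀ x, p x = (∫⁻ y, a x y ∂μ).toReal := by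
    intro x
    exact integral_eq_lintegral_of_nonneg_ae (ae_of_all _ fun y => (hgpos _).le)
      (hamC x).aestronglyMeasurable
  have hppos : ∀ x, 0 < p x := by
    intro x
    rw [hpA x]
    exact ENNReal.toReal_pos (hA0 x) (hAtop x)
  -- Step (a)
  have step_a : ∀ x, ENNReal.ofReal (gaussDensity d s x ^ 2 / p x) ≤
      ∫⁻ y, ENNReal.ofReal (gaussDensity d s x ^ 2 / gaussDensity d s (x - y)) ∂μ := by
    intro x
    have hcs := one_le_lintegral_mul_lintegral_inv μ (ham x)
      (fun y => (ENNReal.ofReal_pos.mpr (hgpos _)).ne') (fun y => ENNReal.ofReal_ne_top)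
    have hinv : (∫⁻ y, a x y ∂μ)⁻¹ ≤ ∫⁻ y, (a x y)⁻¹ ∂μ := by
      calc (∫⁻ y, a x y ∂μ)⁻¹ = (∫⁻ y, a x y ∂μ)⁻¹ * 1 := (mul_one _).symm
      _ ≤ (∫⁻ y, a x y ∂μ)⁻¹ * ((∫⁻ y, a x y ∂μ) * ∫⁻ y, (a x y)⁻¹ ∂μ) :=
          mul_le_mul_right hcs _
      _ = ∫⁻ y, (a x y)⁻¹ ∂μ := by
          rw [← mul_assoc, ENNReal.inv_mul_cancel (hA0 x) (hAtop x), one_mul]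
    calc ENNReal.ofReal (gaussDensity d s x ^ 2 / p x)
        = ENNReal.ofReal (gaussDensity d s x ^ 2) * (∫⁻ y, a x y ∂μ)⁻¹ := by
          rw [ENNReal.ofReal_div_of_pos (hppos x), hpA x,
            ENNReal.ofReal_toReal (hAtop x), div_eq_mul_inv]
    _ ≤ ENNReal.ofReal (gaussDensity d s x ^ 2) * ∫⁻ y, (a x y)⁻¹ ∂μ :=
          mul_le_mul_right hinv _
    _ = ∫⁻ y, ENNReal.ofReal (gaussDensity d s x ^ 2) * (a x y)⁻¹ ∂μ := by
          rw [lintegral_const_mul' _ _ ENNReal.ofReal_ne_top]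
    _ = ∫⁻ y, ENNReal.ofReal (gaussDensity d s x ^ 2 / gaussDensity d s (x - y)) ∂μ := by
          refine lintegral_congr fun y => ?_
          rw [ENNReal.ofReal_div_of_pos (hgpos _), div_eq_mul_inv]
  -- ratio identity
  have hratio : ∀ x y : Euc d, gaussDensity d s x ^ 2 / gaussDensity d s (x - y) =
      gaussDensity d s x * rexp ((‖y‖ ^ 2 - 2 * ⟪x, y⟫) / (2 * s)) := by
    intro x y
    have hnorm : ‖x - y‖ ^ 2 = ‖x‖ ^ 2 - 2 * ⟪x, y⟫ + ‖y‖ ^ 2 := norm_sub_sq_real x y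
    have hsum : -‖x‖ ^ 2 / (2 * s) + -‖x‖ ^ 2 / (2 * s) =
        -‖x‖ ^ 2 / (2 * s) + (‖y‖ ^ 2 - 2 * ⟪x, y⟫) / (2 * s) + -‖x - y‖ ^ 2 / (2 * s) := by
      rw [hnorm]; field_simp; ring
    rw [div_eq_iff (hgpos _).ne']
    unfold gaussDensity
    calc ((2*π*s) ^ (-(d:ℝ)/2) * rexp (-‖x‖ ^ 2 / (2 * s))) ^ 2
        = ((2*π*s) ^ (-(d:ℝ)/2))^2 * rexp (-‖x‖ ^ 2 / (2 * s) + -‖x‖ ^ 2 / (2 * s)) := by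
          rw [Real.exp_add]; ring
    _ = ((2*π*s) ^ (-(d:ℝ)/2))^2 * rexp (-‖x‖ ^ 2 / (2 * s) +
          (‖y‖ ^ 2 - 2 * ⟪x, y⟫) / (2 * s) + -‖x - y‖ ^ 2 / (2 * s)) := by rw [hsum]
    _ = _ := by rw [Real.exp_add, Real.exp_add]; ring
  -- inner Gaussian integral
  have hinner : ∀ y : Euc d,
      (∫⁻ x, ENNReal.ofReal (gaussDensity d s x * rexp ((‖y‖ ^ 2 - 2 * ⟪x, y⟫) / (2 * s)))) =
      ENNReal.ofReal (rexp (‖y‖ ^ 2 / s)) := by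
    intro y
    have hb : (0:ℝ) < 1/(2*s) := by positivity
    have hfun : ∀ x : Euc d, gaussDensity d s x * rexp ((‖y‖ ^ 2 - 2 * ⟪x, y⟫) / (2 * s)) =
        ((2*π*s) ^ (-(d:ℝ)/2) * rexp (‖y‖ ^ 2 / (2 * s))) *
          rexp (-(1/(2*s)) * ‖x‖ ^ 2 + (-(1/s)) * ⟪y, x⟫) := by
      intro x
      have hsum2 : -‖x‖ ^ 2 / (2 * s) + (‖y‖ ^ 2 - 2 * ⟪x, y⟫) / (2 * s) =
          ‖y‖ ^ 2 / (2 * s) + (-(1/(2*s)) * ‖x‖ ^ 2 + (-(1/s)) * ⟪y, x⟫) := by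
        rw [real_inner_comm y x]; field_simp; ring
      unfold gaussDensity
      calc (2*π*s) ^ (-(d:ℝ)/2) * rexp (-‖x‖ ^ 2 / (2 * s)) *
            rexp ((‖y‖ ^ 2 - 2 * ⟪x, y⟫) / (2 * s))
          = (2*π*s) ^ (-(d:ℝ)/2) * rexp (-‖x‖ ^ 2 / (2 * s) +
              (‖y‖ ^ 2 - 2 * ⟪x, y⟫) / (2 * s)) := by rw [Real.exp_add]; ring
      _ = _ := by rw [hsum2, Real.exp_add]; ring
    have hint : Integrable (fun x : Euc d =>
        ((2*π*s) ^ (-(d:ℝ)/2) * rexp (‖y‖ ^ 2 / (2 * s))) *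
          rexp (-(1/(2*s)) * ‖x‖ ^ 2 + (-(1/s)) * ⟪y, x⟫)) :=
      (my_integrable_rexp hb (-(1/s)) y).const_mul _
    rw [lintegral_congr fun x => by rw [hfun x]]
    rw [← ofReal_integral_eq_lintegral_ofReal hint (ae_of_all _ fun x => by positivity)]
    congr 1
    rw [integral_const_mul, my_integral_rexp hb (-(1/s)) y]
    have hrk : (Module.finrank ℝ (Euc d) : ℝ) = d := by
      simp [finrank_euclideanSpace_fin]
    rw [hrk]
    have h1 : π / (1/(2*s)) = 2*π*s := by field_simp
    rw [h1]
    have h2 : (-(1/s)) ^ 2 * ‖y‖ ^ 2 / (4 * (1/(2*s))) = ‖y‖ ^ 2 / (2*s) := by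
      field_simp; ring
    rw [h2]
    rw [show (2*π*s) ^ (-(d:ℝ)/2) * rexp (‖y‖ ^ 2 / (2 * s)) *
        ((2*π*s) ^ ((d:ℝ)/2) * rexp (‖y‖ ^ 2 / (2*s)))
        = ((2*π*s) ^ (-(d:ℝ)/2) * (2*π*s) ^ ((d:ℝ)/2)) *
          (rexp (‖y‖ ^ 2 / (2 * s)) * rexp (‖y‖ ^ 2 / (2*s))) by ring,
      ← Real.rpow_add (by positivity), ← Real.exp_add]
    norm_num
    congr 1
    field_simp
    ring
    simp
  -- main lintegral chain
  have hmain : (∫⁻ x, ENNReal.ofReal (gaussDensity d s x ^ 2 / p x)) ≤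
      ENNReal.ofReal (Real.exp (ρ ^ 2 / s)) := by
    have humeas : AEMeasurable (Function.uncurry fun x y : Euc d =>
        ENNReal.ofReal (gaussDensity d s x * rexp ((‖y‖ ^ 2 - 2 * ⟪x, y⟫) / (2 * s))))
        ((volume : Measure (Euc d)).prod μ) := by
      apply Measurable.aemeasurable
      apply Measurable.ennreal_ofReal
      apply Continuous.measurable
      apply Continuous.mul (hgcont.comp continuous_fst)
      apply Real.continuous_exp.comp
      apply Continuous.div_const
      apply Continuous.sub
      · exact (continuous_norm.comp continuous_snd).pow 2
      · exact continuous_const.mul continuous_inner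
    calc (∫⁻ x, ENNReal.ofReal (gaussDensity d s x ^ 2 / p x))
        ≤ ∫⁻ x, ∫⁻ y, ENNReal.ofReal
            (gaussDensity d s x ^ 2 / gaussDensity d s (x - y)) ∂μ := lintegral_mono step_a
    _ = ∫⁻ x, ∫⁻ y, ENNReal.ofReal
            (gaussDensity d s x * rexp ((‖y‖ ^ 2 - 2 * ⟪x, y⟫) / (2 * s))) ∂μ := by
          refine lintegral_congr fun x => lintegral_congr fun y => by rw [hratio x y]
    _ = ∫⁻ y, (∫⁻ x, ENNReal.ofReal
            (gaussDensity d s x * rexp ((‖y‖ ^ 2 - 2 * ⟪x, y⟫) / (2 * s)))) ∂μ :=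
          lintegral_lintegral_swap humeas
    _ = ∫⁻ y, ENNReal.ofReal (rexp (‖y‖ ^ 2 / s)) ∂μ := lintegral_congr fun y => hinner y
    _ ≤ ∫⁻ _, ENNReal.ofReal (rexp (ρ ^ 2 / s)) ∂μ := by
          refine lintegral_mono_ae (hae.mono fun y hy => ENNReal.ofReal_le_ofReal ?_)
          apply Real.exp_le_exp.mpr
          gcongr
    _ = ENNReal.ofReal (rexp (ρ ^ 2 / s)) := by simp
  -- conclude
  have hmeas_p : AEStronglyMeasurable (fun x => gaussDensity d s x ^ 2 / p x)
      (volume : Measure (Euc d)) := by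
    have hum : StronglyMeasurable (Function.uncurry fun x y : Euc d =>
        gaussDensity d s (x - y)) :=
      (hgcont.comp (continuous_fst.sub continuous_snd)).stronglyMeasurable
    have hpm : Measurable p := hum.integral_prod_right'.measurable
    exact ((hgcont.measurable.pow_const 2).div hpm).aestronglyMeasurable
  rw [integral_eq_lintegral_of_nonneg_ae
    (ae_of_all _ fun x => div_nonneg (sq_nonneg _) (hppos x).le) hmeas_p]
  calc (∫⁻ x, ENNReal.ofReal (gaussDensity d s x ^ 2 / p x)).toReal
      ≤ (ENNReal.ofReal (Real.exp (ρ ^ 2 / s))).toReal :=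
        ENNReal.toReal_mono ENNReal.ofReal_ne_top hmain
  _ = Real.exp (ρ ^ 2 / s) := ENNReal.toReal_ofReal (Real.exp_pos _).le

/-- Let `P̃₀` be a probability measure supported on `B_R(0) ⊆ ℝ^d`, `T > 0`, and
`p̃_T` the forward OU density at time `T`. Then
`χ²(N(0,(1−e^{−T})I_d) ‖ p̃_T) ≤ exp(R²e^{−T}/(1−e^{−T}))`; in particular, for `0 < ε < 1/2`
and `T ≥ max (ln(4R²/ε²)) 1`, `χ²(N(0,(1−e^{−T})I_d) ‖ p̃_T) ≤ ε²`. -/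
theorem stmt_15 {d : ℕ} (P : Measure (Euc d)) [IsProbabilityMeasure P]
    (R : ℝ) (hsupp : P (Metric.closedBall 0 R)ᶜ = 0)
    (T : ℝ) (hT : 0 < T) :
    ((∫ x, gaussDensity d (1 - Real.exp (-T)) x ^ 2 / ouDensity P T x) - 1 ≤
        Real.exp (R ^ 2 * Real.exp (-T) / (1 - Real.exp (-T))))
    ∧ ∀ ε : ℝ, 0 < ε → ε < 1 / 2 → max (Real.log (4 * R ^ 2 / ε ^ 2)) 1 ≤ T →
        (∫ x, gaussDensity d (1 - Real.exp (-T)) x ^ 2 / ouDensity P T x) - 1 ≤ ε ^ 2 := by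
  have hs : 0 < 1 - Real.exp (-T) := by
    have : Real.exp (-T) < 1 := by
      rw [Real.exp_lt_one_iff]
      linarith
    linarith
  have hmeas : Measurable (fun z : Euc d => Real.exp (-T/2) • z) :=
    (continuous_const_smul _).measurable
  haveI : IsProbabilityMeasure (P.map (fun z => Real.exp (-T/2) • z)) :=
    Measure.isProbabilityMeasure_map hmeas.aemeasurable
  have hR : 0 ≤ R := by
    by_contra h
    push_neg at h
    rw [Metric.closedBall_eq_empty.mpr h, Set.compl_empty, measure_univ] at hsupp
    exact one_ne_zero hsupp
  have hPae : ∀ᵐ z ∂P, ‖z‖ ≤ R := by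
    have h1 : ∀ᵐ z ∂P, z ∈ Metric.closedBall 0 R := by
      rw [MeasureTheory.ae_iff]
      exact hsupp
    filter_upwards [h1] with z hz
    simpa [Metric.mem_closedBall, dist_zero_right] using hz
  have hae : ∀ᵐ y ∂(P.map (fun z => Real.exp (-T/2) • z)), ‖y‖ ≤ Real.exp (-T/2) * R := by
    rw [MeasureTheory.ae_map_iff hmeas.aemeasurable
      (measurableSet_le measurable_norm measurable_const)]
    filter_upwards [hPae] with z hz
    rw [norm_smul, Real.norm_eq_abs, abs_of_pos (Real.exp_pos _)]
    exact mul_le_mul_of_nonneg_left hz (Real.exp_pos _).le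
  have key : (∫ x, gaussDensity d (1 - Real.exp (-T)) x ^ 2 / ouDensity P T x) ≤
      Real.exp ((Real.exp (-T/2) * R) ^ 2 / (1 - Real.exp (-T))) := by
    have h := main_aux (P.map (fun z => Real.exp (-T/2) • z)) hs (by positivity) hae
    simp only [ouDensity]
    exact h
  have hexp2 : (Real.exp (-T/2) * R) ^ 2 = R ^ 2 * Real.exp (-T) := by
    rw [mul_pow, pow_two, ← Real.exp_add, show -T/2 + -T/2 = -T by ring]
    ring
  rw [hexp2] at key
  set X := R ^ 2 * Real.exp (-T) / (1 - Real.exp (-T)) with hX_def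
  have hX0 : 0 ≤ X := by positivity
  constructor
  · have := Real.exp_pos X
    linarith
  · intro ε hε hε2 hmax
    have hT1 : (1:ℝ) ≤ T := le_trans (le_max_right _ _) hmax
    have hTlog : Real.log (4 * R ^ 2 / ε ^ 2) ≤ T := le_trans (le_max_left _ _) hmax
    have heT : Real.exp (-T) ≤ 1/2 := by
      have h2e : (2:ℝ) ≤ Real.exp 1 := by
        have := Real.add_one_le_exp 1
        linarith
      calc Real.exp (-T) ≤ Real.exp (-1) := Real.exp_le_exp.mpr (by linarith)
      _ = (Real.exp 1)⁻¹ := Real.exp_neg 1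
      _ ≤ 2⁻¹ := inv_anti₀ (by norm_num) h2e
      _ = 1/2 := by norm_num
    have hs2 : 1/2 ≤ 1 - Real.exp (-T) := by linarith
    have hXb : X ≤ ε ^ 2 / 2 := by
      rcases eq_or_lt_of_le hR with hR0 | hR0
      · rw [hX_def, ← hR0]
        simp
        positivity
      · have hu : (0:ℝ) < 4 * R ^ 2 / ε ^ 2 := by positivity
        have hloge : Real.exp (-T) ≤ ε ^ 2 / (4 * R ^ 2) := by
          calc Real.exp (-T) ≤ Real.exp (-(Real.log (4 * R ^ 2 / ε ^ 2))) :=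
            Real.exp_le_exp.mpr (by linarith)
          _ = (4 * R ^ 2 / ε ^ 2)⁻¹ := by rw [Real.exp_neg, Real.exp_log hu]
          _ = ε ^ 2 / (4 * R ^ 2) := by rw [inv_div]
        have h1 : R ^ 2 * Real.exp (-T) ≤ ε ^ 2 / 4 := by
          calc R ^ 2 * Real.exp (-T) ≤ R ^ 2 * (ε ^ 2 / (4 * R ^ 2)) :=
            mul_le_mul_of_nonneg_left hloge (sq_nonneg R)
          _ = ε ^ 2 / 4 := by field_simp
        calc X ≤ (ε ^ 2 / 4) / (1/2) :=
          div_le_div₀ (by positivity) h1 (by norm_num) hs2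
        _ = ε ^ 2 / 2 := by ring
    have hX8 : X ≤ 1/8 := by nlinarith
    have hoXpos : 0 < 1 - X := by linarith
    have hexple : Real.exp X ≤ (1 - X)⁻¹ := by
      have h1 : 1 - X ≤ Real.exp (-X) := by
        have := Real.add_one_le_exp (-X)
        linarith
      rw [show Real.exp X = (Real.exp (-X))⁻¹ by rw [Real.exp_neg, inv_inv]]
      exact inv_anti₀ hoXpos h1
    have h3 : (1 - X)⁻¹ ≤ 1 + 2 * X := by
      rw [inv_eq_one_div, div_le_iff₀ hoXpos]
      nlinarith
    linarith
end
end
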